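/- arXiv:1011.5053 — 10 statements merged into one kernel-verified Lean document; each statement's English description precedes it below -/
import Mathlib

section
/- Let d be a positive integer, let λ₁ ≥ λ₂ ≥ … ≥ λ_d ≥ 0 be real numbers, and for γ' > 0 define k_{γ'} = min{ k ∈ {0,1,…,d} : Σ_{i=k+1}^d λ_i ≤ γ'² · k }. Then for every γ > 0 and every α with 0 < α < 1, one has k_γ ≤ k_{αγ} and k_{αγ} ≤ 2·k_γ/α² + 1. -/
/-- Let `λ₁ ≥ … ≥ λ_d ≥ 0` and for `γ' > 0` let
`k_{γ'} = min { k ∈ {0,…,d} : Σ_{i=k+1}^d λᵢ ≤ γ'² k }` (indices `0,…,d-1` in Lean,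
so the sum is over indices `i ≥ k`).  Then for `γ > 0` and `0 < α < 1`,
`k_γ ≤ k_{αγ}` and `k_{αγ} ≤ 2 k_γ / α² + 1`. -/
theorem gamma_adapted_dimension_growth
    (d : ℕ) (hd : 0 < d) (lam : Fin d → ℝ)
    (hmono : ∀ i j : Fin d, i ≤ j → lam j ≤ lam i)
    (hnonneg : ∀ i, 0 ≤ lam i)
    (k : ℝ → ℕ)
    (hk : ∀ γ' : ℝ, 0 < γ' →
      k γ' = sInf {kk : ℕ | kk ≤ d ∧
        ∑ i ∈ Finset.univ.filter (fun i : Fin d => kk ≤ (i : ℕ)), lam i ≤ γ' ^ 2 * kk})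
    (γ α : ℝ) (hγ : 0 < γ) (hα0 : 0 < α) (hα1 : α < 1) :
    k γ ≤ k (α * γ) ∧ (k (α * γ) : ℝ) ≤ 2 * (k γ : ℝ) / α ^ 2 + 1 := by
  have hαγ : 0 < α * γ := mul_pos hα0 hγ
  set S : ℕ → ℝ := fun kk => ∑ i ∈ Finset.univ.filter (fun i : Fin d => kk ≤ (i : ℕ)), lam i
    with hS
  set A : ℝ → Set ℕ := fun γ' => {kk : ℕ | kk ≤ d ∧ S kk ≤ γ' ^ 2 * kk} with hA
  have hkA : ∀ γ' : ℝ, 0 < γ' → k γ' = sInf (A γ') := hk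
  have hSd : S d = 0 := by
    rw [hS]
    apply Finset.sum_eq_zero
    intro i hi
    simp only [Finset.mem_filter, Finset.mem_univ, true_and] at hi
    exact absurd hi (Nat.not_le.mpr i.isLt)
  have hSmono : ∀ m n : ℕ, m ≤ n → S n ≤ S m := by
    intro m n h
    apply Finset.sum_le_sum_of_subset_of_nonneg
    · intro i hi
      simp only [Finset.mem_filter, Finset.mem_univ, true_and] at *
      omega
    · intro i _ _; exact hnonneg i
  have hdmem : ∀ γ' : ℝ, 0 < γ' → d ∈ A γ' := by
    intro γ' hγ'
    refine ⟨le_refl d, ?_⟩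
    rw [hSd]
    positivity
  have hne : ∀ γ' : ℝ, 0 < γ' → (A γ').Nonempty := fun γ' h => ⟨d, hdmem γ' h⟩
  -- part 1
  have hsub : A (α * γ) ⊆ A γ := by
    intro kk hkk
    refine ⟨hkk.1, hkk.2.trans ?_⟩
    have h1 : (α * γ) ^ 2 ≤ γ ^ 2 := by
      apply pow_le_pow_left₀ hαγ.le
      nlinarith
    have h2 : (0:ℝ) ≤ (kk:ℝ) := Nat.cast_nonneg _
    nlinarith
  have part1 : k γ ≤ k (α * γ) := by
    rw [hkA γ hγ, hkA (α * γ) hαγ]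
    exact Nat.sInf_le (hsub (Nat.sInf_mem (hne _ hαγ)))
  refine ⟨part1, ?_⟩
  -- part 2
  set m := k γ with hm
  have hmmem : m ∈ A γ := by rw [hm, hkA γ hγ]; exact Nat.sInf_mem (hne _ hγ)
  have hα2 : (0:ℝ) < α ^ 2 := by positivity
  set c : ℕ := ⌈(m : ℝ) / α ^ 2⌉₊ with hc
  have hmc : m ≤ c := by
    have h1 : (m:ℝ) ≤ (m:ℝ) / α ^ 2 := by
      rw [le_div_iff₀ hα2]
      have hle : α ^ 2 ≤ 1 := by nlinarith
      nlinarith [mul_nonneg (Nat.cast_nonneg (α := ℝ) m) (sub_nonneg.mpr hle)]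
    calc m = ⌈((m:ℝ))⌉₊ := by simp
      _ ≤ c := Nat.ceil_le_ceil h1
  set n : ℕ := min d c with hn
  have hnmem : n ∈ A (α * γ) := by
    refine ⟨min_le_left _ _, ?_⟩
    rcases le_or_gt d c with hdc | hdc
    · have : n = d := min_eq_left hdc
      rw [this, hSd]
      positivity
    · have hnc : n = c := min_eq_right hdc.le
      have h1 : S n ≤ S m := by rw [hnc]; exact hSmono m c hmc
      have h2 : S m ≤ γ ^ 2 * m := hmmem.2
      have h3 : (m:ℝ) / α ^ 2 ≤ (n:ℝ) := by rw [hnc]; exact Nat.le_ceil _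
      have h4 : (m:ℝ) ≤ α ^ 2 * n := by
        rw [div_le_iff₀ hα2] at h3; linarith
      have h5 : γ ^ 2 * m ≤ (α * γ) ^ 2 * n := by nlinarith
      linarith
  have hkn : k (α * γ) ≤ n := by
    rw [hkA (α * γ) hαγ]; exact Nat.sInf_le hnmem
  have hcast : (k (α * γ) : ℝ) ≤ (n : ℝ) := Nat.cast_le.mpr hkn
  have hnc : (n : ℝ) ≤ (c : ℝ) := Nat.cast_le.mpr (min_le_right _ _)
  have hcb : (c : ℝ) ≤ (m : ℝ) / α ^ 2 + 1 :=
    (Nat.ceil_lt_add_one (by positivity)).le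
  have hdiv : (0:ℝ) ≤ (m:ℝ) / α ^ 2 := by positivity
  have h2m : 2 * (m : ℝ) / α ^ 2 = 2 * ((m:ℝ) / α ^ 2) := by ring
  calc (k (α * γ) : ℝ) ≤ (c : ℝ) := hcast.trans hnc
    _ ≤ (m : ℝ) / α ^ 2 + 1 := hcb
    _ ≤ 2 * (m : ℝ) / α ^ 2 + 1 := by rw [h2m]; linarith
end

section
/- Let γ > 0, B ≥ 0, k ∈ ℕ, and let X ⊆ ℝ^d be a (B², k)-limited set. If a finite sequence of m distinct points of X is γ-shattered by unit-norm linear separators, then m ≤ (3/2)·(B²/γ² + k + 1). In particular, the γ-fat-shattering dimension of the class of linear functions x ↦ ⟨w,x⟩ with ‖w‖₂ ≤ 1 restricted to X is at most (3/2)·(B²/γ² + k + 1). -/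
open scoped RealInnerProductSpace

/-- A set `X ⊆ ℝ^d` is `(b,k)`-limited: there is a subspace `V` of dimension `d - k`
whose orthogonal projection `P` satisfies `‖Px‖² ≤ b` for every `x ∈ X`. -/
def IsLimitedSet {d : ℕ} (b : ℝ) (k : ℕ) (X : Set (EuclideanSpace ℝ (Fin d))) : Prop :=
  ∃ V : Submodule ℝ (EuclideanSpace ℝ (Fin d)), Module.finrank ℝ V = d - k ∧
    ∀ x ∈ X, ‖(V.orthogonalProjection x : EuclideanSpace ℝ (Fin d))‖ ^ 2 ≤ b

/-- A finite sequence `x₁,…,x_m` is `γ`-shattered by unit-norm linear separators: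
there are biases `r₁,…,r_m` such that every sign vector `y ∈ {±1}^m` is realized
with margin `γ` by some `w` with `‖w‖ ≤ 1`. -/
def GammaShattered {d m : ℕ} (γ : ℝ) (x : Fin m → EuclideanSpace ℝ (Fin d)) : Prop :=
  ∃ r : Fin m → ℝ, ∀ y : Fin m → ℝ, (∀ i, y i = 1 ∨ y i = -1) →
    ∃ w : EuclideanSpace ℝ (Fin d), ‖w‖ ≤ 1 ∧ ∀ i, γ ≤ y i * (⟪w, x i⟫ - r i)

open Finset

noncomputable def sgn {m : ℕ} (σ : Fin m → Bool) : Fin m → ℝ := fun j => if σ j then 1 else -1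

lemma sgn_sq {m : ℕ} (σ : Fin m → Bool) (j : Fin m) : sgn σ j * sgn σ j = 1 := by
  unfold sgn; split <;> norm_num

lemma sgn_abs {m : ℕ} (σ : Fin m → Bool) (j : Fin m) : sgn σ j = 1 ∨ sgn σ j = -1 := by
  unfold sgn; split <;> simp

lemma sum_sgn_mul {m : ℕ} (j l : Fin m) (hjl : j ≠ l) :
    ∑ σ : Fin m → Bool, sgn σ j * sgn σ l = 0 := by
  apply Finset.sum_ninvolution (fun σ => Function.update σ j (!(σ j)))
  · intro σ
    have h1 : sgn (Function.update σ j (!(σ j))) j = - sgn σ j := by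
      unfold sgn; simp [Function.update_self]; cases σ j <;> simp
    have h2 : sgn (Function.update σ j (!(σ j))) l = sgn σ l := by
      unfold sgn; rw [Function.update_of_ne (Ne.symm hjl)]
    rw [h1, h2]; ring
  · intro σ h
    intro hc
    have := congrFun hc j
    simp [Function.update_self] at this
  · intro σ; exact Finset.mem_univ _
  · intro σ
    funext i
    by_cases hi : i = j
    · subst hi; simp [Function.update_self]
    · simp [Function.update_of_ne hi]

lemma sum_sq_norm_sign {m : ℕ} {E : Type*} [NormedAddCommGroup E] [InnerProductSpace ℝ E]
    (z : Fin m → E) :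
    ∑ σ : Fin m → Bool, ‖∑ j, sgn σ j • z j‖ ^ 2 = 2 ^ m * ∑ j, ‖z j‖ ^ 2 := by
  have expand : ∀ σ : Fin m → Bool, ‖∑ j, sgn σ j • z j‖ ^ 2
      = ∑ j, ∑ l, (sgn σ j * sgn σ l) * ⟪z j, z l⟫ := by
    intro σ
    rw [← real_inner_self_eq_norm_sq, sum_inner]
    congr 1; funext j
    rw [inner_sum]
    congr 1; funext l
    rw [real_inner_smul_left, real_inner_smul_right]; ring
  simp_rw [expand]
  rw [Finset.sum_comm]
  have : ∀ j : Fin m, ∑ σ : Fin m → Bool, ∑ l, (sgn σ j * sgn σ l) * ⟪z j, z l⟫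
      = 2 ^ m * ‖z j‖ ^ 2 := by
    intro j
    rw [Finset.sum_comm]
    have : ∀ l : Fin m, ∑ σ : Fin m → Bool, (sgn σ j * sgn σ l) * ⟪z j, z l⟫
        = (if j = l then (2:ℝ) ^ m * ⟪z j, z l⟫ else 0) := by
      intro l
      rw [← Finset.sum_mul]
      by_cases hjl : j = l
      · subst hjl
        simp only [if_pos rfl]
        congr 1
        have : ∀ σ : Fin m → Bool, sgn σ j * sgn σ j = 1 := fun σ => sgn_sq σ j
        rw [Finset.sum_congr rfl (fun σ _ => this σ)]
        simp [Finset.card_univ]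
      · rw [sum_sgn_mul j l hjl]; simp [hjl]
    rw [Finset.sum_congr rfl (fun l _ => this l), Finset.sum_ite_eq univ j
      (fun l => (2:ℝ) ^ m * ⟪z j, z l⟫)]
    simp [real_inner_self_eq_norm_sq]
  rw [Finset.sum_congr rfl (fun j _ => this j), ← Finset.mul_sum]

lemma euclid_norm_sq {n : ℕ} (v : EuclideanSpace ℝ (Fin n)) : ‖v‖ ^ 2 = ∑ i, v i ^ 2 := by
  rw [EuclideanSpace.norm_eq, Real.sq_sqrt (by positivity)]
  simp [Real.norm_eq_abs, sq_abs]

lemma euclid_inner {n : ℕ} (v w : EuclideanSpace ℝ (Fin n)) : ⟪v, w⟫ = ∑ i, v i * w i := by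
  simp [PiLp.inner_apply, RCLike.inner_apply]
  exact Finset.sum_congr rfl fun _ _ => mul_comm _ _

lemma euclid_decomp {n : ℕ} (v : EuclideanSpace ℝ (Fin n)) :
    v = ∑ j, v j • EuclideanSpace.single j (1:ℝ) := by
  ext i
  rw [WithLp.ofLp_sum, Finset.sum_apply]
  simp [EuclideanSpace.single_apply]

noncomputable def amap {m d : ℕ} (u : Fin m → EuclideanSpace ℝ (Fin d)) :
    EuclideanSpace ℝ (Fin m) →ₗ[ℝ] EuclideanSpace ℝ (Fin d) where
  toFun c := ∑ i, c i • u i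
  map_add' a b := by
    simp only [PiLp.add_apply, add_smul, Finset.sum_add_distrib]
  map_smul' t a := by
    simp only [PiLp.smul_apply, smul_eq_mul, RingHom.id_apply, ← smul_smul, ← Finset.smul_sum]

lemma amap_apply {m d : ℕ} (u : Fin m → EuclideanSpace ℝ (Fin d)) (c : EuclideanSpace ℝ (Fin m)) :
    amap u c = ∑ i, c i • u i := rfl

lemma amap_coord {m d : ℕ} (u : Fin m → EuclideanSpace ℝ (Fin d)) (c : EuclideanSpace ℝ (Fin m))
    (t : Fin d) : amap u c t = ⟪c, (WithLp.toLp 2 (fun i => u i t) : EuclideanSpace ℝ (Fin m))⟫ := by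
  rw [euclid_inner]
  show (∑ i, c i • u i) t = _
  rw [WithLp.ofLp_sum, Finset.sum_apply]
  rfl

noncomputable def pkmap {m : ℕ} (K : Submodule ℝ (EuclideanSpace ℝ (Fin m))) :
    EuclideanSpace ℝ (Fin m) →ₗ[ℝ] EuclideanSpace ℝ (Fin m) :=
  K.subtype ∘ₗ (K.orthogonalProjection : EuclideanSpace ℝ (Fin m) →L[ℝ] K).toLinearMap

lemma pk_apply {m : ℕ} (K : Submodule ℝ (EuclideanSpace ℝ (Fin m))) (v : EuclideanSpace ℝ (Fin m)) :
    pkmap K v = (K.orthogonalProjection v : EuclideanSpace ℝ (Fin m)) := rfl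

lemma pk_mem {m : ℕ} (K : Submodule ℝ (EuclideanSpace ℝ (Fin m))) (v : EuclideanSpace ℝ (Fin m)) :
    pkmap K v ∈ K := (K.orthogonalProjection v).2

lemma pk_norm_le {m : ℕ} (K : Submodule ℝ (EuclideanSpace ℝ (Fin m))) (v : EuclideanSpace ℝ (Fin m)) :
    ‖pkmap K v‖ ≤ ‖v‖ := by
  have h := (K.orthogonalProjection).le_opNorm v
  have h2 := Submodule.orthogonalProjectionOnto_norm_le (K := K)
  calc ‖pkmap K v‖ = ‖K.orthogonalProjection v‖ := rfl
    _ ≤ ‖K.orthogonalProjection‖ * ‖v‖ := h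
    _ ≤ 1 * ‖v‖ := mul_le_mul_of_nonneg_right h2 (norm_nonneg _)
    _ = ‖v‖ := one_mul _

lemma pk_adj {m : ℕ} (K : Submodule ℝ (EuclideanSpace ℝ (Fin m))) (v w : EuclideanSpace ℝ (Fin m)) :
    ⟪pkmap K v, w⟫ = ⟪v, pkmap K w⟫ := K.inner_starProjection_left_eq_right v w

lemma pk_eq_self {m : ℕ} (K : Submodule ℝ (EuclideanSpace ℝ (Fin m))) (v : EuclideanSpace ℝ (Fin m))
    (hv : v ∈ K) : pkmap K v = v :=
  congrArg (Submodule.subtype K) (Submodule.orthogonalProjectionOnto_mem_subspace_eq_self (K := K) (⟨v, hv⟩ : K))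

lemma pk_inner_self {m : ℕ} (K : Submodule ℝ (EuclideanSpace ℝ (Fin m))) (v : EuclideanSpace ℝ (Fin m)) :
    ‖pkmap K v‖ ^ 2 = ⟪pkmap K v, v⟫ := by
  rw [← real_inner_self_eq_norm_sq]
  calc ⟪pkmap K v, pkmap K v⟫ = ⟪v, pkmap K (pkmap K v)⟫ := pk_adj K v (pkmap K v)
    _ = ⟪v, pkmap K v⟫ := by rw [pk_eq_self K _ (pk_mem K v)]
    _ = ⟪pkmap K v, v⟫ := real_inner_comm _ _

lemma coord_of_pk {m : ℕ} (K : Submodule ℝ (EuclideanSpace ℝ (Fin m))) (j : Fin m)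
    (v : EuclideanSpace ℝ (Fin m)) (hv : v ∈ K) :
    ⟪v, pkmap K (EuclideanSpace.single j (1:ℝ))⟫ = v j := by
  calc ⟪v, pkmap K (EuclideanSpace.single j 1)⟫
      = ⟪pkmap K v, EuclideanSpace.single j 1⟫ := (pk_adj K v _).symm
    _ = ⟪v, EuclideanSpace.single j 1⟫ := by rw [pk_eq_self K v hv]
    _ = v j := by rw [real_inner_comm, EuclideanSpace.inner_single_left]; simp

lemma trace_pk {m : ℕ} (K : Submodule ℝ (EuclideanSpace ℝ (Fin m))) :
    ∑ j, ‖pkmap K (EuclideanSpace.single j (1:ℝ))‖ ^ 2 = (Module.finrank ℝ K : ℝ) := by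
  set R := Module.finrank ℝ K with hR
  let b : OrthonormalBasis (Fin R) ℝ K := stdOrthonormalBasis ℝ K
  have key : ∀ j : Fin m, ‖pkmap K (EuclideanSpace.single j (1:ℝ))‖ ^ 2
      = ∑ f : Fin R, ((b f : EuclideanSpace ℝ (Fin m)) j) ^ 2 := by
    intro j
    have h1 : ‖pkmap K (EuclideanSpace.single j (1:ℝ))‖
        = ‖(K.orthogonalProjection (EuclideanSpace.single j (1:ℝ)) : K)‖ := rfl
    rw [h1, ← b.repr.norm_map, euclid_norm_sq]
    refine Finset.sum_congr rfl fun f _ => ?_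
    rw [b.repr_apply_apply]
    congr 1
    have : ⟪b f, K.orthogonalProjection (EuclideanSpace.single j (1:ℝ))⟫
        = ⟪(b f : EuclideanSpace ℝ (Fin m)), pkmap K (EuclideanSpace.single j (1:ℝ))⟫ := rfl
    rw [this, coord_of_pk K j _ (b f).2]
  rw [Finset.sum_congr rfl fun j _ => key j, Finset.sum_comm]
  have : ∀ f : Fin R, ∑ j, ((b f : EuclideanSpace ℝ (Fin m)) j) ^ 2 = 1 := by
    intro f
    rw [← euclid_norm_sq]
    have : ‖(b f : EuclideanSpace ℝ (Fin m))‖ = ‖b f‖ := rfl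
    rw [this, b.orthonormal.1 f]
    norm_num
  rw [Finset.sum_congr rfl fun f _ => this f]
  simp

lemma trace_amap_pk {m d : ℕ} (K : Submodule ℝ (EuclideanSpace ℝ (Fin m)))
    (u : Fin m → EuclideanSpace ℝ (Fin d)) :
    ∑ j, ‖amap u (pkmap K (EuclideanSpace.single j (1:ℝ)))‖ ^ 2 ≤ ∑ i, ‖u i‖ ^ 2 := by
  have key : ∀ j : Fin m, ‖amap u (pkmap K (EuclideanSpace.single j (1:ℝ)))‖ ^ 2
      = ∑ t, (pkmap K (WithLp.toLp 2 (fun i => u i t) : EuclideanSpace ℝ (Fin m)) j) ^ 2 := by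
    intro j
    rw [euclid_norm_sq]
    refine Finset.sum_congr rfl fun t _ => ?_
    rw [amap_coord]
    congr 1
    calc ⟪pkmap K (EuclideanSpace.single j (1:ℝ)), (WithLp.toLp 2 (fun i => u i t) : EuclideanSpace ℝ (Fin m))⟫
        = ⟪EuclideanSpace.single j (1:ℝ), pkmap K (WithLp.toLp 2 (fun i => u i t) : EuclideanSpace ℝ (Fin m))⟫ :=
          pk_adj K _ _
      _ = pkmap K (WithLp.toLp 2 (fun i => u i t) : EuclideanSpace ℝ (Fin m)) j := by
          rw [EuclideanSpace.inner_single_left]; simp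
  rw [Finset.sum_congr rfl fun j _ => key j, Finset.sum_comm]
  have step : ∀ t : Fin d, ∑ j, (pkmap K (WithLp.toLp 2 (fun i => u i t) : EuclideanSpace ℝ (Fin m)) j) ^ 2
      ≤ ∑ i, (u i t) ^ 2 := by
    intro t
    set vt : EuclideanSpace ℝ (Fin m) := WithLp.toLp 2 (fun i => u i t) with hvt
    have h1 : ∑ j, (pkmap K vt j) ^ 2 = ‖pkmap K vt‖ ^ 2 := (euclid_norm_sq _).symm
    have h2 : ∑ i, (u i t) ^ 2 = ‖vt‖ ^ 2 := by
      rw [euclid_norm_sq vt]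
    rw [h1, h2]
    exact pow_le_pow_left₀ (norm_nonneg _) (pk_norm_le K vt) 2
  calc ∑ t, ∑ j, (pkmap K (WithLp.toLp 2 (fun i => u i t) : EuclideanSpace ℝ (Fin m)) j) ^ 2
      ≤ ∑ t, ∑ i, (u i t) ^ 2 := Finset.sum_le_sum fun t _ => step t
    _ = ∑ i, ∑ t, (u i t) ^ 2 := Finset.sum_comm
    _ = ∑ i, ‖u i‖ ^ 2 := Finset.sum_congr rfl fun i _ => (euclid_norm_sq _).symm
lemma final_bound {γ B s k m : ℝ} (hγ : 0 < γ) (hB : 0 ≤ B) (hs : 0 ≤ s) (hk : 0 ≤ k)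
    (h1 : γ^2 * s^2 ≤ m * B^2) (h2 : m ≤ k + s) : m ≤ 3/2 * (B^2/γ^2 + k + 1) := by
  have hγ2 : (0:ℝ) < γ^2 := by positivity
  have key : 2*s*γ^2 ≤ 3*B^2 + (k+3)*γ^2 := by
    by_contra hcon
    push_neg at hcon
    have p1 : 0 < 2*s*γ^2 - 3*B^2 - (k+3)*γ^2 := by linarith
    have p2 : 0 ≤ (k+s)*B^2 - γ^2*s^2 := by nlinarith
    nlinarith [mul_nonneg (mul_nonneg hγ2.le hs) p1.le, mul_nonneg hγ2.le p2,
      mul_nonneg (sq_nonneg B) p1.le, mul_nonneg (mul_nonneg hk hγ2.le) p1.le,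
      mul_pos hγ2 p1, sq_nonneg (B*γ), sq_nonneg (B^2), sq_nonneg ((k+3)*γ^2)]
  have goal2 : m * (2*γ^2) ≤ (3/2 * (B^2/γ^2 + k + 1)) * (2*γ^2) := by
    have hrw : (3/2 * (B^2/γ^2 + k + 1)) * (2*γ^2) = 3*B^2 + 3*k*γ^2 + 3*γ^2 := by
      field_simp
    rw [hrw]
    nlinarith
  exact le_of_mul_le_mul_right goal2 (by positivity)

noncomputable def esgn {m : ℕ} (σ : Fin m → Bool) : EuclideanSpace ℝ (Fin m) := WithLp.toLp 2 (sgn σ)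

lemma esgn_decomp {m : ℕ} (σ : Fin m → Bool) :
    esgn σ = ∑ j, sgn σ j • EuclideanSpace.single j (1:ℝ) := euclid_decomp (esgn σ)


/-- If `X ⊆ ℝ^d` is `(B², k)`-limited and a sequence of `m` distinct
points of `X` is `γ`-shattered by unit-norm linear separators, then
`m ≤ (3/2)(B²/γ² + k + 1)`; hence the `γ`-fat-shattering dimension of the class of
unit-norm linear functions on `X` is at most `(3/2)(B²/γ² + k + 1)`. -/
theorem fat_shattering_of_limited
    (d m k : ℕ) (hkd : k ≤ d) (γ B : ℝ) (hγ : 0 < γ) (hB : 0 ≤ B)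
    (X : Set (EuclideanSpace ℝ (Fin d)))
    (hlim : IsLimitedSet (B ^ 2) k X)
    (x : Fin m → EuclideanSpace ℝ (Fin d))
    (hinj : Function.Injective x) (hmem : ∀ i, x i ∈ X)
    (hshat : GammaShattered γ x) :
    (m : ℝ) ≤ 3 / 2 * (B ^ 2 / γ ^ 2 + k + 1) := by
  classical
  obtain ⟨V, hVrank, hVb⟩ := hlim
  obtain ⟨r, hr⟩ := hshat
  -- Step 1: homogeneous shattering (eliminate biases by pairing ±y)
  have hom : ∀ y : Fin m → ℝ, (∀ i, y i = 1 ∨ y i = -1) →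
      ∃ w : EuclideanSpace ℝ (Fin d), ‖w‖ ≤ 1 ∧ ∀ i, γ ≤ y i * ⟪w, x i⟫ := by
    intro y hy
    obtain ⟨w₁, hw₁, h1⟩ := hr y hy
    obtain ⟨w₂, hw₂, h2⟩ := hr (fun i => -y i) (fun i => by rcases hy i with h | h <;> simp [h])
    refine ⟨(1/2 : ℝ) • (w₁ - w₂), ?_, ?_⟩
    · rw [norm_smul, Real.norm_eq_abs, abs_of_nonneg (by norm_num : (0:ℝ) ≤ 1/2)]
      have := norm_sub_le w₁ w₂
      nlinarith [norm_nonneg (w₁ - w₂)]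
    · intro i
      have e1 := h1 i
      have e2 := h2 i
      have hin : ⟪(1/2:ℝ) • (w₁ - w₂), x i⟫ = (1/2) * (⟪w₁, x i⟫ - ⟪w₂, x i⟫) := by
        rw [real_inner_smul_left, inner_sub_left]
      rw [hin]
      rcases hy i with h | h <;> rw [h] at e1 e2 ⊢ <;> nlinarith
  -- Step 2: weighted shattering
  have W : ∀ c : Fin m → ℝ, γ * ∑ i, |c i| ≤ ‖∑ i, c i • x i‖ := by
    intro c
    obtain ⟨w, hw, hwy⟩ := hom (fun i => if 0 ≤ c i then 1 else -1)
      (fun i => by by_cases h : 0 ≤ c i <;> simp [h])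
    have key : ∀ i, γ * |c i| ≤ c i * ⟪w, x i⟫ := by
      intro i
      have hi := hwy i
      by_cases h : 0 ≤ c i
      · rw [if_pos h, one_mul] at hi
        rw [abs_of_nonneg h]
        nlinarith
      · push_neg at h
        rw [if_neg (not_le.2 h)] at hi
        rw [abs_of_neg h]
        nlinarith
    calc γ * ∑ i, |c i| = ∑ i, γ * |c i| := Finset.mul_sum _ _ _
      _ ≤ ∑ i, c i * ⟪w, x i⟫ := Finset.sum_le_sum fun i _ => key i
      _ = ⟪w, ∑ i, c i • x i⟫ := by
          rw [inner_sum]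
          exact Finset.sum_congr rfl fun i _ => (real_inner_smul_right _ _ _).symm
      _ ≤ ‖w‖ * ‖∑ i, c i • x i‖ := real_inner_le_norm _ _
      _ ≤ 1 * ‖∑ i, c i • x i‖ := mul_le_mul_of_nonneg_right hw (norm_nonneg _)
      _ = _ := one_mul _
  -- Step 3: decomposition x = u + q with u bounded and q ∈ Vᗮ
  set u : Fin m → EuclideanSpace ℝ (Fin d) :=
    fun i => (V.orthogonalProjection (x i) : EuclideanSpace ℝ (Fin d)) with hu
  set q : Fin m → EuclideanSpace ℝ (Fin d) := fun i => x i - u i with hqd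
  have hq : ∀ i, q i ∈ Vᗮ := fun i => Submodule.sub_starProjection_mem_orthogonal (K := V) (x i)
  have hub : ∀ i, ‖u i‖ ^ 2 ≤ B ^ 2 := fun i => hVb (x i) (hmem i)
  set K := LinearMap.ker (amap q) with hKdef
  set R := Module.finrank ℝ K with hRdef
  -- Step 4: rank facts
  have hVo : Module.finrank ℝ Vᗮ = k := by
    have h := V.finrank_add_finrank_orthogonal
    rw [hVrank, finrank_euclideanSpace_fin] at h
    omega
  have hrange : LinearMap.range (amap q) ≤ Vᗮ := by
    rintro _ ⟨c, rfl⟩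
    rw [amap_apply]
    exact Submodule.sum_mem _ fun i _ => Submodule.smul_mem _ _ (hq i)
  have hrk : Module.finrank ℝ (LinearMap.range (amap q)) ≤ k := by
    rw [← hVo]
    exact Submodule.finrank_mono hrange
  have hrn := LinearMap.finrank_range_add_finrank_ker (amap q)
  rw [finrank_euclideanSpace_fin] at hrn
  have hmkR : m ≤ k + R := by
    have hR' : Module.finrank ℝ (LinearMap.ker (amap q)) = R := rfl
    omega
  -- Step 5: per sign-vector inequality
  have perσ : ∀ σ : Fin m → Bool,
      γ * ‖pkmap K (esgn σ)‖ ^ 2 ≤ ‖amap u (pkmap K (esgn σ))‖ := by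
    intro σ
    set c := pkmap K (esgn σ) with hc
    have hcK : c ∈ K := pk_mem K _
    have hLc : amap q c = 0 := LinearMap.mem_ker.mp hcK
    have hxc : ∑ i, c i • x i = amap u c := by
      rw [amap_apply]
      have hsplit : ∀ i, c i • x i = c i • u i + c i • q i := by
        intro i
        rw [← smul_add]
        congr 1
        simp [hqd]
      rw [Finset.sum_congr rfl fun i _ => hsplit i, Finset.sum_add_distrib]
      have hz : ∑ i, c i • q i = 0 := by rw [← amap_apply q c, hLc]
      rw [hz, add_zero]
    have habs : ‖c‖ ^ 2 ≤ ∑ i, |c i| := by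
      rw [hc, pk_inner_self K (esgn σ), euclid_inner]
      refine Finset.sum_le_sum fun i _ => ?_
      have h2 : esgn σ i = sgn σ i := rfl
      rcases sgn_abs σ i with h | h <;> rw [h2, h]
      · rw [mul_one]; exact le_abs_self _
      · rw [mul_neg_one]; exact neg_le_abs _
    calc γ * ‖c‖ ^ 2 ≤ γ * ∑ i, |c i| := mul_le_mul_of_nonneg_left habs hγ.le
      _ ≤ ‖∑ i, c i • x i‖ := W c
      _ = ‖amap u c‖ := by rw [hxc]
  -- Step 6: sum over sign vectors
  have hdecompPK : ∀ σ : Fin m → Bool,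
      pkmap K (esgn σ) = ∑ j, sgn σ j • pkmap K (EuclideanSpace.single j (1:ℝ)) := by
    intro σ
    rw [esgn_decomp σ, map_sum]
    exact Finset.sum_congr rfl fun j _ => map_smul _ _ _
  have hdecompA : ∀ σ : Fin m → Bool, amap u (pkmap K (esgn σ))
      = ∑ j, sgn σ j • amap u (pkmap K (EuclideanSpace.single j (1:ℝ))) := by
    intro σ
    rw [hdecompPK σ, map_sum]
    exact Finset.sum_congr rfl fun j _ => map_smul _ _ _
  have SL : ∑ σ : Fin m → Bool, ‖pkmap K (esgn σ)‖ ^ 2 = 2 ^ m * (R : ℝ) := by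
    calc ∑ σ : Fin m → Bool, ‖pkmap K (esgn σ)‖ ^ 2
        = ∑ σ : Fin m → Bool, ‖∑ j, sgn σ j • pkmap K (EuclideanSpace.single j (1:ℝ))‖ ^ 2 :=
          Finset.sum_congr rfl fun σ _ => by rw [hdecompPK σ]
      _ = 2 ^ m * ∑ j, ‖pkmap K (EuclideanSpace.single j (1:ℝ))‖ ^ 2 := sum_sq_norm_sign _
      _ = 2 ^ m * (R : ℝ) := by rw [trace_pk]
  have husum : ∑ i, ‖u i‖ ^ 2 ≤ (m : ℝ) * B ^ 2 := by
    calc ∑ i, ‖u i‖ ^ 2 ≤ ∑ _i : Fin m, B ^ 2 := Finset.sum_le_sum fun i _ => hub i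
      _ = (m : ℝ) * B ^ 2 := by simp [Finset.sum_const, Finset.card_univ, nsmul_eq_mul]
  have SU : ∑ σ : Fin m → Bool, ‖amap u (pkmap K (esgn σ))‖ ^ 2
      ≤ 2 ^ m * ((m : ℝ) * B ^ 2) := by
    calc ∑ σ : Fin m → Bool, ‖amap u (pkmap K (esgn σ))‖ ^ 2
        = ∑ σ : Fin m → Bool,
            ‖∑ j, sgn σ j • amap u (pkmap K (EuclideanSpace.single j (1:ℝ)))‖ ^ 2 :=
          Finset.sum_congr rfl fun σ _ => by rw [hdecompA σ]
      _ = 2 ^ m * ∑ j, ‖amap u (pkmap K (EuclideanSpace.single j (1:ℝ)))‖ ^ 2 :=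
          sum_sq_norm_sign _
      _ ≤ 2 ^ m * ∑ i, ‖u i‖ ^ 2 :=
          mul_le_mul_of_nonneg_left (trace_amap_pk K u) (by positivity)
      _ ≤ 2 ^ m * ((m : ℝ) * B ^ 2) := mul_le_mul_of_nonneg_left husum (by positivity)
  have T : γ * (2 ^ m * (R : ℝ)) ≤ ∑ σ : Fin m → Bool, ‖amap u (pkmap K (esgn σ))‖ := by
    calc γ * (2 ^ m * (R : ℝ)) = ∑ σ : Fin m → Bool, γ * ‖pkmap K (esgn σ)‖ ^ 2 := by
          rw [← Finset.mul_sum, SL]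
      _ ≤ _ := Finset.sum_le_sum fun σ _ => perσ σ
  have hCS : (∑ σ : Fin m → Bool, ‖amap u (pkmap K (esgn σ))‖) ^ 2
      ≤ 2 ^ m * (2 ^ m * ((m : ℝ) * B ^ 2)) := by
    have h1 := sq_sum_le_card_mul_sum_sq
      (s := (Finset.univ : Finset (Fin m → Bool)))
      (f := fun σ => ‖amap u (pkmap K (esgn σ))‖)
    have hcard : ((Finset.univ : Finset (Fin m → Bool)).card : ℝ) = 2 ^ m := by
      simp [Finset.card_univ]
    calc (∑ σ : Fin m → Bool, ‖amap u (pkmap K (esgn σ))‖) ^ 2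
        ≤ ((Finset.univ : Finset (Fin m → Bool)).card : ℝ)
            * ∑ σ : Fin m → Bool, ‖amap u (pkmap K (esgn σ))‖ ^ 2 := h1
      _ = 2 ^ m * ∑ σ : Fin m → Bool, ‖amap u (pkmap K (esgn σ))‖ ^ 2 := by rw [hcard]
      _ ≤ 2 ^ m * (2 ^ m * ((m : ℝ) * B ^ 2)) :=
          mul_le_mul_of_nonneg_left SU (by positivity)
  have hkey : γ ^ 2 * (R : ℝ) ^ 2 ≤ (m : ℝ) * B ^ 2 := by
    have hL0 : (0:ℝ) ≤ γ * (2 ^ m * (R : ℝ)) := by positivity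
    have hsq : (γ * (2 ^ m * (R : ℝ))) ^ 2 ≤ 2 ^ m * (2 ^ m * ((m : ℝ) * B ^ 2)) :=
      le_trans (pow_le_pow_left₀ hL0 T 2) hCS
    have h2m : (0:ℝ) < (2 ^ m : ℝ) ^ 2 := by positivity
    have hre : ((2:ℝ) ^ m) ^ 2 * (γ ^ 2 * (R:ℝ) ^ 2) ≤ ((2:ℝ) ^ m) ^ 2 * ((m : ℝ) * B ^ 2) := by
      nlinarith [hsq]
    exact le_of_mul_le_mul_left hre h2m
  exact final_bound hγ hB (by positivity) (Nat.cast_nonneg k) hkey (by exact_mod_cast hmkR)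
end

section
/- Let S = (x₁,…,x_m) be a sequence of points in ℝ^d and let X be the m×d matrix whose rows are x₁,…,x_m. If S is γ-shattered by unit-norm linear separators, then for every ε > 0 there exists a column vector r ∈ ℝ^m such that, letting X̃ = (X | r) be the m×(d+1) matrix obtained by appending r as an extra column, for every y ∈ {−γ, +γ}^m there exists w_y ∈ ℝ^{d+1} with ‖w_y‖₂ ≤ 1 + ε and X̃ w_y = y. -/
open Matrix

/-- A finite sequence of points (the rows of `X`) is `γ`-shattered by unit-norm
linear separators. -/
def GammaShatteredRows {m d : ℕ} (γ : ℝ) (X : Matrix (Fin m) (Fin d) ℝ) : Prop :=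
  ∃ r : Fin m → ℝ, ∀ y : Fin m → ℝ, (∀ i, y i = 1 ∨ y i = -1) →
    ∃ w : Fin d → ℝ, ∑ j, (w j) ^ 2 ≤ 1 ∧ ∀ i, γ ≤ y i * ((∑ j, w j * X i j) - r i)

set_option maxHeartbeats 2000000 in
/-- If the rows of `X` are `γ`-shattered, then for every `ε > 0`
there is a column `r ∈ ℝ^m` such that, appending `r` to `X` to form `X̃`, every
`y ∈ {−γ,+γ}^m` is realized exactly: `X̃ w_y = y` for some `w_y` with
`‖w_y‖ ≤ 1 + ε`. -/
theorem shattered_exact_margins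
    (m d : ℕ) (γ : ℝ) (hγ : 0 < γ)
    (X : Matrix (Fin m) (Fin d) ℝ)
    (hshat : GammaShatteredRows γ X) :
    ∀ ε : ℝ, 0 < ε → ∃ r : Fin m → ℝ,
      ∀ y : Fin m → ℝ, (∀ i, y i = γ ∨ y i = -γ) →
        ∃ w : Fin (d + 1) → ℝ, ∑ j, (w j) ^ 2 ≤ (1 + ε) ^ 2 ∧
          (Matrix.of fun (i : Fin m) (j : Fin (d + 1)) =>
              if h : (j : ℕ) < d then X i ⟨j, h⟩ else r i).mulVec w = y := by
  intro ε hε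
  obtain ⟨r₀, hr₀⟩ := hshat
  refine ⟨fun i => -(1/ε) * r₀ i, ?_⟩
  intro y hy
  set Xt : Matrix (Fin m) (Fin (d + 1)) ℝ :=
    Matrix.of fun (i : Fin m) (j : Fin (d + 1)) =>
      if h : (j : ℕ) < d then X i ⟨j, h⟩ else -(1/ε) * r₀ i with hXt
  -- work in Euclidean spaces
  let E := EuclideanSpace ℝ (Fin (d + 1))
  let F := EuclideanSpace ℝ (Fin m)
  let eE := EuclideanSpace.equiv (Fin (d + 1)) ℝ
  let eF := EuclideanSpace.equiv (Fin m) ℝ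
  let Lmap : E →ₗ[ℝ] F :=
    (eF.symm.toLinearEquiv.toLinearMap.comp Xt.mulVecLin).comp eE.toLinearEquiv.toLinearMap
  let L : E →L[ℝ] F := LinearMap.toContinuousLinearMap Lmap
  have hL : ∀ p : E, L p = eF.symm (Xt.mulVec (eE p)) := fun p => rfl
  let A : Set F := L '' Metric.closedBall 0 (1 + ε)
  have hAconv : Convex ℝ A := (convex_closedBall (0 : E) (1 + ε)).linear_image Lmap
  have hAcomp : IsCompact A := (isCompact_closedBall 0 (1 + ε)).image L.continuous
  have hAclosed : IsClosed A := hAcomp.isClosed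
  set yF : F := eF.symm y with hyF
  have hyA : yF ∈ A := by
    by_contra hnot
    obtain ⟨f, s, hfa, hfy⟩ := geometric_hahn_banach_closed_point hAconv hAclosed hnot
    set u : Fin m → ℝ := fun i => f (EuclideanSpace.single i (1 : ℝ)) with hu
    have hfv : ∀ v : F, f v = ∑ i, eF v i * u i := by
      intro v
      have hv : v = ∑ i, eF v i • EuclideanSpace.single i (1 : ℝ) := by
        have hb := (EuclideanSpace.basisFun (Fin m) ℝ).sum_repr v
        exact (by simpa [EuclideanSpace.basisFun_apply, EuclideanSpace.basisFun_repr] using hb.symm : v = ∑ i, v.ofLp i • EuclideanSpace.single i (1 : ℝ))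
      conv_lhs => rw [hv]
      simp [u]
    -- sign pattern
    set sg : Fin m → ℝ := fun i => if 0 ≤ u i then 1 else -1 with hsg
    obtain ⟨w₀, hw₀n, hw₀⟩ := hr₀ sg (fun i => by by_cases h : 0 ≤ u i <;> simp [sg, h])
    -- the witness point
    set p : E := eE.symm (fun j => if h : (j : ℕ) < d then w₀ ⟨j, h⟩ else ε) with hp
    have hpmem : p ∈ Metric.closedBall (0 : E) (1 + ε) := by
      rw [Metric.mem_closedBall, dist_zero_right]
      have h1 : ‖p‖ ^ 2 = ∑ j, (eE p j) ^ 2 := by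
        rw [EuclideanSpace.norm_eq, Real.sq_sqrt (by positivity)]
        exact Finset.sum_congr rfl fun j _ => by rw [Real.norm_eq_abs, sq_abs]; rfl
      have h2 : ∑ j, (eE p j) ^ 2 = (∑ j : Fin d, (w₀ j) ^ 2) + ε ^ 2 := by
        rw [Fin.sum_univ_castSucc]
        congr 1
        · refine Finset.sum_congr rfl fun j _ => ?_
          have : ((Fin.castSucc j : Fin (d+1)) : ℕ) < d := j.isLt
          simp [p, this]
        · simp [p]
      have hnp : ‖p‖ ^ 2 ≤ (1 + ε) ^ 2 := by
        rw [h1, h2]; nlinarith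
      nlinarith [norm_nonneg p]
    have hLp : ∀ i, eF (L p) i = (∑ j, w₀ j * X i j) - r₀ i := by
      intro i
      rw [hL]
      show Xt.mulVec (eE p) i = _
      rw [Matrix.mulVec, dotProduct, Fin.sum_univ_castSucc]
      have hlast : Xt i (Fin.last d) * (eE p) (Fin.last d) = - r₀ i := by
        simp [Xt, p]
        field_simp
      rw [hlast]
      have hrest : ∀ j : Fin d, Xt i (Fin.castSucc j) * (eE p) (Fin.castSucc j)
          = w₀ j * X i j := by
        intro j
        have hj : ((Fin.castSucc j : Fin (d+1)) : ℕ) < d := j.isLt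
        simp [Xt, p, hj, mul_comm]
      rw [Finset.sum_congr rfl fun j _ => hrest j]
      ring
    have hkey : f yF ≤ f (L p) := by
      rw [hfv, hfv]
      have hyFi : ∀ i, eF yF i = y i := fun i => rfl
      refine Finset.sum_le_sum fun i _ => ?_
      rw [hLp i, hyFi i]
      have hmargin := hw₀ i
      rcases hy i with h | h <;> by_cases hui : 0 ≤ u i <;>
        simp only [sg, hui, if_true, if_false, one_mul, neg_one_mul] at hmargin <;>
        rw [h] <;> nlinarith [hmargin, hγ]
    have hlt : f (L p) < s := hfa _ ⟨p, hpmem, rfl⟩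
    linarith
  obtain ⟨p, hpmem, hLpy⟩ := hyA
  refine ⟨eE p, ?_, ?_⟩
  · rw [Metric.mem_closedBall, dist_zero_right] at hpmem
    have h1 : ‖p‖ ^ 2 = ∑ j, (eE p j) ^ 2 := by
      rw [EuclideanSpace.norm_eq, Real.sq_sqrt (by positivity)]
      exact Finset.sum_congr rfl fun j _ => by rw [Real.norm_eq_abs, sq_abs]; rfl
    calc ∑ j, (eE p j) ^ 2 = ‖p‖ ^ 2 := h1.symm
      _ ≤ (1 + ε) ^ 2 := by nlinarith [norm_nonneg p]
  · funext i
    have h2 : eF (L p) i = eF yF i := by rw [hLpy]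
    exact h2
end

section
/- Let S = (x₁,…,x_m) be a sequence of points in ℝ^d and let X be the m×d matrix whose rows are x₁,…,x_m. Then S is 1-shattered at the origin if and only if the m×m Gram matrix XXᵀ is invertible and for every sign vector y ∈ {±1}^m one has yᵀ(XXᵀ)⁻¹y ≤ 1. -/
open Matrix

/-- The rows of `X` are `1`-shattered at the origin: every sign vector `y ∈ {±1}^m`
is realized with margin `1` and zero bias by some `w` with `‖w‖ ≤ 1`. -/
def OneShatteredAtOrigin {m d : ℕ} (X : Matrix (Fin m) (Fin d) ℝ) : Prop :=
  ∀ y : Fin m → ℝ, (∀ i, y i = 1 ∨ y i = -1) →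
    ∃ w : Fin d → ℝ, ∑ j, (w j) ^ 2 ≤ 1 ∧ ∀ i, 1 ≤ y i * (X.mulVec w i)

/-- Key induction: if `X` is 1-shattered, then a sign vector `y` can be realized
*exactly* on a finset `s` of coordinates, with margin elsewhere. -/
lemma exact_aux {m d : ℕ} (X : Matrix (Fin m) (Fin d) ℝ)
    (hS : OneShatteredAtOrigin X) (y : Fin m → ℝ) (hy : ∀ i, y i = 1 ∨ y i = -1)
    (s : Finset (Fin m)) :
    ∀ ε : Fin m → ℝ, (∀ i, ε i = 1 ∨ ε i = -1) →
      ∃ w : Fin d → ℝ, ∑ j, (w j) ^ 2 ≤ 1 ∧ (∀ i ∈ s, X.mulVec w i = y i) ∧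
        (∀ i ∉ s, 1 ≤ ε i * X.mulVec w i) := by
  classical
  induction s using Finset.induction_on with
  | empty =>
    intro ε hε
    obtain ⟨w, hw1, hw2⟩ := hS ε hε
    exact ⟨w, hw1, by simp, fun i _ => hw2 i⟩
  | @insert a s ha IH =>
    intro ε hε
    have hεp : ∀ i, Function.update ε a (1:ℝ) i = 1 ∨ Function.update ε a (1:ℝ) i = -1 := by
      intro i
      rcases eq_or_ne i a with h | h
      · subst h; left; simp
      · rw [Function.update_of_ne h]; exact hε i
    have hεm : ∀ i, Function.update ε a (-1:ℝ) i = 1 ∨ Function.update ε a (-1:ℝ) i = -1 := by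
      intro i
      rcases eq_or_ne i a with h | h
      · subst h; right; simp
      · rw [Function.update_of_ne h]; exact hε i
    obtain ⟨wp, hwp1, hwp2, hwp3⟩ := IH _ hεp
    obtain ⟨wm, hwm1, hwm2, hwm3⟩ := IH _ hεm
    set p := X.mulVec wp a with hp_def
    set b := X.mulVec wm a with hb_def
    have hp : 1 ≤ p := by
      have := hwp3 a ha
      simpa using this
    have hb : b ≤ -1 := by
      have := hwm3 a ha
      simp at this
      linarith
    have hpb : 0 < p - b := by linarith
    set t : ℝ := (y a - b) / (p - b) with ht_def
    have hya : -1 ≤ y a ∧ y a ≤ 1 := by rcases hy a with h | h <;> rw [h] <;> norm_num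
    have ht0 : 0 ≤ t := div_nonneg (by linarith [hya.1]) (le_of_lt hpb)
    have ht1 : t ≤ 1 := by
      rw [div_le_one hpb]; linarith [hya.2]
    refine ⟨t • wp + (1-t) • wm, ?_, ?_, ?_⟩
    · calc ∑ j, ((t • wp + (1-t) • wm) j) ^ 2
          ≤ ∑ j, (t * (wp j)^2 + (1-t) * (wm j)^2) := by
            apply Finset.sum_le_sum
            intro j _
            simp only [Pi.add_apply, Pi.smul_apply, smul_eq_mul]
            nlinarith [mul_nonneg (mul_nonneg ht0 (by linarith : (0:ℝ) ≤ 1 - t)) (sq_nonneg (wp j - wm j))]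
      _ = t * (∑ j, (wp j)^2) + (1-t) * (∑ j, (wm j)^2) := by
            rw [Finset.sum_add_distrib, Finset.mul_sum, Finset.mul_sum]
      _ ≤ t * 1 + (1-t) * 1 := by
            apply add_le_add
            · exact mul_le_mul_of_nonneg_left hwp1 ht0
            · exact mul_le_mul_of_nonneg_left hwm1 (by linarith)
      _ = 1 := by ring
    · intro i hi
      rw [mulVec_add, mulVec_smul, mulVec_smul]
      simp only [Pi.add_apply, Pi.smul_apply, smul_eq_mul]
      rcases Finset.mem_insert.mp hi with h | h
      · subst h
        rw [← hp_def, ← hb_def, ht_def]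
        field_simp
        ring
      · rw [hwp2 i h, hwm2 i h]; ring
    · intro i hi
      have hia : i ≠ a := fun h => hi (h ▸ Finset.mem_insert_self a s)
      have his : i ∉ s := fun h => hi (Finset.mem_insert_of_mem h)
      have h1 := hwp3 i his
      have h2 := hwm3 i his
      rw [Function.update_of_ne hia] at h1 h2
      rw [mulVec_add, mulVec_smul, mulVec_smul]
      simp only [Pi.add_apply, Pi.smul_apply, smul_eq_mul]
      nlinarith [h1, h2, ht0, ht1]

/-- Exact realization of every sign vector. -/
lemma exact_real {m d : ℕ} (X : Matrix (Fin m) (Fin d) ℝ)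
    (hS : OneShatteredAtOrigin X) (y : Fin m → ℝ) (hy : ∀ i, y i = 1 ∨ y i = -1) :
    ∃ w : Fin d → ℝ, ∑ j, (w j) ^ 2 ≤ 1 ∧ X.mulVec w = y := by
  obtain ⟨w, hw1, hw2, -⟩ := exact_aux X hS y hy Finset.univ y hy
  exact ⟨w, hw1, funext fun i => hw2 i (Finset.mem_univ i)⟩

/-- Shattering implies the Gram matrix is invertible. -/
lemma gram_isUnit {m d : ℕ} (X : Matrix (Fin m) (Fin d) ℝ)
    (hS : OneShatteredAtOrigin X) : IsUnit (X * Xᵀ) := by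
  classical
  rw [Matrix.isUnit_iff_isUnit_det, isUnit_iff_ne_zero]
  intro hdet
  obtain ⟨c, hc, hGc⟩ := (Matrix.exists_mulVec_eq_zero_iff).mpr hdet
  have hu : vecMul c X ⬝ᵥ vecMul c X = 0 := by
    have : c ⬝ᵥ (X * Xᵀ).mulVec c = 0 := by rw [hGc]; simp
    rw [← mulVec_mulVec, dotProduct_mulVec, mulVec_transpose] at this
    exact this
  have hu0 : vecMul c X = 0 := by
    funext j
    have h := Finset.sum_eq_zero_iff_of_nonneg
      (fun j _ => mul_self_nonneg (vecMul c X j)) |>.mp hu j (Finset.mem_univ j)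
    exact mul_self_eq_zero.mp h
  set y : Fin m → ℝ := fun i => if c i < 0 then -1 else 1 with hy_def
  have hy : ∀ i, y i = 1 ∨ y i = -1 := by
    intro i; by_cases h : c i < 0 <;> simp [hy_def, h]
  obtain ⟨w, -, hw2⟩ := hS y hy
  have hzero : c ⬝ᵥ X.mulVec w = 0 := by
    rw [dotProduct_mulVec, hu0, zero_dotProduct]
  have hterm : ∀ i, |c i| ≤ c i * X.mulVec w i := by
    intro i
    have h := hw2 i
    by_cases h' : c i < 0
    · rw [hy_def] at h; simp only [if_pos h'] at h
      rw [abs_of_neg h']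
      nlinarith
    · rw [hy_def] at h; simp only [if_neg h'] at h
      push_neg at h'
      rw [abs_of_nonneg h']
      nlinarith
  have hsum : (0:ℝ) < ∑ i, |c i| := by
    obtain ⟨i, hi⟩ := Function.ne_iff.mp hc
    apply Finset.sum_pos' (fun i _ => abs_nonneg _)
    exact ⟨i, Finset.mem_univ i, abs_pos.mpr hi⟩
  have : (0:ℝ) < c ⬝ᵥ X.mulVec w :=
    lt_of_lt_of_le hsum (Finset.sum_le_sum (fun i _ => hterm i))
  rw [hzero] at this
  exact lt_irrefl 0 this

lemma dot_inv_eq {m d : ℕ} (X : Matrix (Fin m) (Fin d) ℝ) (hG : IsUnit (X * Xᵀ))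
    (y : Fin m → ℝ) :
    let v := (X * Xᵀ)⁻¹.mulVec y
    (X * Xᵀ).mulVec v = y ∧
      (Xᵀ.mulVec v) ⬝ᵥ (Xᵀ.mulVec v) = y ⬝ᵥ (X * Xᵀ)⁻¹.mulVec y := by
  intro v
  have hdet := (Matrix.isUnit_iff_isUnit_det _).mp hG
  have hGv : (X * Xᵀ).mulVec v = y := by
    rw [show v = (X * Xᵀ)⁻¹.mulVec y from rfl, mulVec_mulVec,
      Matrix.mul_nonsing_inv _ hdet, one_mulVec]
  constructor
  · exact hGv
  · have h1 : v ⬝ᵥ (X * Xᵀ).mulVec v = (Xᵀ.mulVec v) ⬝ᵥ (Xᵀ.mulVec v) := by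
      rw [← mulVec_mulVec, dotProduct_mulVec, mulVec_transpose]
    rw [← h1, hGv, dotProduct_comm]

/-- The rows of `X` are `1`-shattered at the origin iff the Gram
matrix `X Xᵀ` is invertible and `yᵀ (X Xᵀ)⁻¹ y ≤ 1` for every sign vector `y`. -/
theorem one_shattered_iff_gram
    (m d : ℕ) (X : Matrix (Fin m) (Fin d) ℝ) :
    OneShatteredAtOrigin X ↔
      (IsUnit (X * Xᵀ) ∧ ∀ y : Fin m → ℝ, (∀ i, y i = 1 ∨ y i = -1) →
        y ⬝ᵥ (X * Xᵀ)⁻¹.mulVec y ≤ 1) := by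
  constructor
  · intro hS
    have hG := gram_isUnit X hS
    refine ⟨hG, fun y hy => ?_⟩
    obtain ⟨w, hw1, hw2⟩ := exact_real X hS y hy
    obtain ⟨hGv, huu⟩ := dot_inv_eq X hG y
    set v := (X * Xᵀ)⁻¹.mulVec y with hv_def
    set u := Xᵀ.mulVec v with hu_def
    have hwu : w ⬝ᵥ u = y ⬝ᵥ v := by
      rw [hu_def, dotProduct_mulVec, vecMul_transpose, hw2]
    have hww : w ⬝ᵥ w = ∑ j, (w j)^2 := by simp [dotProduct, sq]
    have h0 : 0 ≤ (w - u) ⬝ᵥ (w - u) :=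
      Finset.sum_nonneg (fun j _ => mul_self_nonneg _)
    have hexp : (w - u) ⬝ᵥ (w - u) = w ⬝ᵥ w - 2 * (w ⬝ᵥ u) + u ⬝ᵥ u := by
      rw [sub_dotProduct, dotProduct_sub, dotProduct_sub, dotProduct_comm u w]
      ring
    rw [hexp, hwu, huu] at h0
    rw [hww] at h0
    linarith
  · rintro ⟨hG, hb⟩ y hy
    obtain ⟨hGv, huu⟩ := dot_inv_eq X hG y
    refine ⟨Xᵀ.mulVec ((X * Xᵀ)⁻¹.mulVec y), ?_, ?_⟩
    · have : ∑ j, (Xᵀ.mulVec ((X * Xᵀ)⁻¹.mulVec y) j)^2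
          = (Xᵀ.mulVec ((X * Xᵀ)⁻¹.mulVec y)) ⬝ᵥ (Xᵀ.mulVec ((X * Xᵀ)⁻¹.mulVec y)) := by
        simp [dotProduct, sq]
      rw [this, huu]
      exact hb y hy
    · intro i
      have : X.mulVec (Xᵀ.mulVec ((X * Xᵀ)⁻¹.mulVec y)) = y := by
        rw [mulVec_mulVec]
        exact hGv
      rw [this]
      rcases hy i with h | h <;> rw [h] <;> norm_num
end

section
/- Let S = (x₁,…,x_m) be a sequence of points in ℝ^d and let X be the m×d matrix whose rows are x₁,…,x_m. If the smallest eigenvalue of the Gram matrix XXᵀ satisfies λ_m(XXᵀ) ≥ m, then S is 1-shattered at the origin. -/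
open Matrix

/-- If the smallest eigenvalue of the Gram matrix `X Xᵀ` is at
least `m` (i.e. every eigenvalue is at least `m`), then the rows of `X` are
`1`-shattered at the origin. -/
theorem one_shattered_of_smallest_eigenvalue
    (m d : ℕ) (hm : 0 < m) (X : Matrix (Fin m) (Fin d) ℝ)
    (hherm : (X * Xᵀ).IsHermitian)
    (heig : ∀ i : Fin m, (m : ℝ) ≤ hherm.eigenvalues i) :
    OneShatteredAtOrigin X := by
  set G : Matrix (Fin m) (Fin m) ℝ := X * Xᵀ with hG
  have hmpos : (0:ℝ) < m := by exact_mod_cast hm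
  -- G - m • 1 is positive semidefinite
  have hpsd : PosSemidef (G - (m:ℝ) • 1) := by
    have hspec := hherm.spectral_theorem
    set U : Matrix (Fin m) (Fin m) ℝ := (hherm.eigenvectorUnitary : Matrix (Fin m) (Fin m) ℝ)
    have hU : U * star U = 1 := (Matrix.mem_unitaryGroup_iff).mp hherm.eigenvectorUnitary.2
    have key : G - (m:ℝ) • 1 =
        U * diagonal (fun i => hherm.eigenvalues i - (m:ℝ)) * Uᴴ := by
      have h1 : ((m:ℝ) • 1 : Matrix (Fin m) (Fin m) ℝ) = U * ((m:ℝ) • 1) * star U := by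
        rw [Matrix.mul_smul, Matrix.smul_mul, Matrix.mul_one, hU]
      calc G - (m:ℝ) • 1
          = U * diagonal (RCLike.ofReal ∘ hherm.eigenvalues) * star U
            - U * ((m:ℝ) • 1) * star U := by rw [← h1]; exact congrArg (· - _) (hspec.trans (Unitary.conjStarAlgAut_apply _ _))
        _ = U * (diagonal (RCLike.ofReal ∘ hherm.eigenvalues) - (m:ℝ) • 1) * star U := by
            rw [Matrix.mul_sub, Matrix.sub_mul]
        _ = U * diagonal (fun i => hherm.eigenvalues i - (m:ℝ)) * Uᴴ := by
            rw [smul_one_eq_diagonal, ← diagonal_sub]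
            rfl
    rw [key]
    exact (PosSemidef.diagonal (fun i => sub_nonneg.2 (heig i))).mul_mul_conjTranspose_same U
  -- quadratic form lower bound
  have hquad : ∀ x : Fin m → ℝ, (m:ℝ) * (x ⬝ᵥ x) ≤ x ⬝ᵥ G.mulVec x := by
    intro x
    have := hpsd.dotProduct_mulVec_nonneg x
    simp only [star_trivial, sub_mulVec, dotProduct_sub, smul_mulVec, one_mulVec,
      dotProduct_smul, smul_eq_mul] at this
    linarith
  -- G is invertible
  have hdet : IsUnit G.det := by
    rw [hherm.det_eq_prod_eigenvalues]
    refine (Finset.prod_pos fun i _ => lt_of_lt_of_le hmpos (heig i)).ne'.isUnit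
  intro y hy
  set v : Fin m → ℝ := G⁻¹.mulVec y with hv
  set w : Fin d → ℝ := Xᵀ.mulVec v with hw
  have hGv : G.mulVec v = y := by
    rw [hv, mulVec_mulVec, Matrix.mul_nonsing_inv _ hdet, one_mulVec]
  have hXw : X.mulVec w = y := by
    rw [hw, mulVec_mulVec, ← hG, hGv]
  have hyy : y ⬝ᵥ y = (m:ℝ) := by
    simp only [dotProduct]
    rw [show (m:ℝ) = ∑ _i : Fin m, (1:ℝ) by simp]
    exact Finset.sum_congr rfl fun i _ => by rcases hy i with h | h <;> rw [h] <;> ring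
  -- ‖w‖² = v ⬝ᵥ y
  have hwsq : ∑ j, (w j) ^ 2 = v ⬝ᵥ y := by
    have h1 : ∑ j, (w j) ^ 2 = w ⬝ᵥ w := by
      simp [dotProduct, sq]
    rw [h1, hw, dotProduct_mulVec, vecMul_transpose, mulVec_mulVec, ← hG, hGv, dotProduct_comm]
  set t : ℝ := v ⬝ᵥ y with ht
  have htG : (m:ℝ) * (v ⬝ᵥ v) ≤ t := by
    have := hquad v
    rwa [hGv] at this
  have hvv : (0:ℝ) ≤ v ⬝ᵥ v := by
    simpa [dotProduct] using Finset.sum_nonneg (fun i _ => mul_self_nonneg (v i))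
  have hcs : t ^ 2 ≤ (v ⬝ᵥ v) * (m:ℝ) := by
    have := Finset.sum_mul_sq_le_sq_mul_sq Finset.univ v y
    simpa [ht, dotProduct, sq, hyy.symm ▸ (rfl : y ⬝ᵥ y = y ⬝ᵥ y), ← hyy] using this
  have ht1 : t ≤ 1 := by
    nlinarith [sq_nonneg t, sq_nonneg (t - 1)]
  refine ⟨w, by rw [hwsq]; exact ht1, fun i => ?_⟩
  rw [hXw]
  rcases hy i with h | h <;> rw [h] <;> ring_nf <;> norm_num
end

section
/- Let D be a probability distribution over ℝ^d × {±1}, let γ > 0, η ∈ [0,1], and let n be a positive integer. Let X_S denote the 2n × d random matrix whose rows are the points of an i.i.d. sample of size 2n from the marginal D_X. If P[λ_{2n}(X_S X_Sᵀ) ≥ 2n·γ²] ≥ η, then there exists a margin-error minimization algorithm A for samples of size n such that E_{S,S̃ ∼ D^n}[ℓ̂(A_γ(S, S̃_X), S̃)] ≥ η/2. -/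
open MeasureTheory Matrix

/-- Empirical `γ`-margin loss of `w` on a labeled sample `S` of size `n`. -/
noncomputable def empMarginLoss {n d : ℕ} (γ : ℝ) (w : Fin d → ℝ)
    (S : Fin n → (Fin d → ℝ) × ℝ) : ℝ :=
  ((Finset.univ.filter fun i : Fin n => (S i).2 * (∑ j, (S i).1 j * w j) ≤ γ).card : ℝ) / n

/-- `A` is a margin-error minimization algorithm at margin `γ`. -/
def IsMarginErrorMinimizer {n d : ℕ} (γ : ℝ)
    (A : (Fin n → (Fin d → ℝ) × ℝ) → (Fin n → Fin d → ℝ) → (Fin d → ℝ)) : Prop :=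
  ∀ S T, (∑ j, (A S T) j ^ 2 ≤ 1) ∧
    ∀ w : Fin d → ℝ, ∑ j, (w j) ^ 2 ≤ 1 → empMarginLoss γ (A S T) S ≤ empMarginLoss γ w S

namespace NotLearnedAux

variable {d n : ℕ}

/-- margin error count -/
noncomputable def mcount (γ : ℝ) (w : Fin d → ℝ) (S : Fin n → (Fin d → ℝ) × ℝ) : ℕ :=
  (Finset.univ.filter fun i : Fin n => (S i).2 * (∑ j, (S i).1 j * w j) ≤ γ).card

lemma exists_rat_mcount_le {γ : ℝ} (hγ : 0 < γ) (S : Fin n → (Fin d → ℝ) × ℝ) (w : Fin d → ℝ)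
    (hw : ∑ j, w j ^ 2 ≤ 1) :
    ∃ q : Fin d → ℚ, (∑ j, (q j : ℝ) ^ 2 ≤ 1) ∧
      mcount γ (fun j => (q j : ℝ)) S ≤ mcount γ w S := by
  classical
  set m : Fin n → ℝ := fun i => (S i).2 * (∑ j, (S i).1 j * w j) with hm
  set I : Finset (Fin n) := Finset.univ.filter (fun i => ¬ (m i ≤ γ)) with hI
  have hmI : ∀ i ∈ I, γ < m i := by
    intro i hi
    exact lt_of_not_ge (Finset.mem_filter.mp hi).2
  obtain ⟨t, ht0, ht1, htm⟩ : ∃ t : ℝ, 0 < t ∧ t < 1 ∧ ∀ i ∈ I, γ < t * m i := by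
    rcases I.eq_empty_or_nonempty with h | h
    · exact ⟨1/2, by norm_num, by norm_num, by simp [h]⟩
    · set M := I.inf' h m with hM
      have hγM : γ < M := (Finset.lt_inf'_iff h).mpr hmI
      have hM0 : 0 < M := lt_trans hγ hγM
      refine ⟨(γ/M + 1)/2, by positivity, ?_, ?_⟩
      · have : γ / M < 1 := (div_lt_one hM0).mpr hγM
        linarith
      · intro i hi
        have h1 : M ≤ m i := Finset.inf'_le m hi
        have h2 : γ / M < (γ/M + 1)/2 := by
          have : γ / M < 1 := (div_lt_one hM0).mpr hγM
          linarith
        have h3 : γ < ((γ/M + 1)/2) * M := by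
          have := (div_lt_iff₀ hM0).mp h2
          linarith [this]
        calc γ < ((γ/M + 1)/2) * M := h3
          _ ≤ ((γ/M + 1)/2) * m i := by
              apply mul_le_mul_of_nonneg_left h1 (by positivity)
  set u₀ : Fin d → ℝ := fun j => t * w j with hu₀
  set U : Set (Fin d → ℝ) :=
    {u | (∑ j, u j ^ 2) < 1 ∧ ∀ i ∈ I, γ < (S i).2 * ∑ j, (S i).1 j * u j} with hU
  have hUopen : IsOpen U := by
    have h1 : IsOpen {u : Fin d → ℝ | (∑ j, u j ^ 2) < 1} := by
      apply isOpen_lt _ continuous_const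
      fun_prop
    have h2 : ∀ i : Fin n, IsOpen {u : Fin d → ℝ | γ < (S i).2 * ∑ j, (S i).1 j * u j} := by
      intro i
      apply isOpen_lt continuous_const
      fun_prop
    have hrw : U = {u : Fin d → ℝ | (∑ j, u j ^ 2) < 1} ∩
        ⋂ i ∈ I, {u : Fin d → ℝ | γ < (S i).2 * ∑ j, (S i).1 j * u j} := by
      ext u; simp [hU, Set.mem_iInter]
    rw [hrw]
    exact h1.inter (isOpen_biInter_finset fun i _ => h2 i)
  have hu₀U : u₀ ∈ U := by
    constructor
    · have hsum : ∑ j, (t * w j) ^ 2 = t^2 * ∑ j, w j ^ 2 := by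
        rw [Finset.mul_sum]; apply Finset.sum_congr rfl; intros; ring
      show ∑ j, (t * w j) ^ 2 < 1
      rw [hsum]; nlinarith
    · intro i hi
      have hst : (∑ j, (S i).1 j * (t * w j)) = t * ∑ j, (S i).1 j * w j := by
        rw [Finset.mul_sum]; apply Finset.sum_congr rfl; intros; ring
      show γ < (S i).2 * ∑ j, (S i).1 j * (t * w j)
      calc γ < t * m i := htm i hi
        _ = (S i).2 * ∑ j, (S i).1 j * (t * w j) := by
            simp only [hm]; rw [hst]; ring
  obtain ⟨ε, hε, hball⟩ := Metric.isOpen_iff.mp hUopen u₀ hu₀U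
  have hrat : ∀ j, ∃ qq : ℚ, u₀ j - ε/2 < qq ∧ (qq:ℝ) < u₀ j + ε/2 :=
    fun j => exists_rat_btwn (by linarith)
  choose q hq1 hq2 using hrat
  have hqU : (fun j => (q j : ℝ)) ∈ U := by
    apply hball
    rw [Metric.mem_ball, dist_pi_lt_iff hε]
    intro j
    rw [Real.dist_eq, abs_lt]
    constructor <;> linarith [hq1 j, hq2 j, hε]
  refine ⟨q, le_of_lt hqU.1, ?_⟩
  apply Finset.card_le_card
  intro i hi
  simp only [Finset.mem_filter] at hi ⊢
  refine ⟨Finset.mem_univ _, ?_⟩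
  by_contra hcon
  exact absurd (hqU.2 i (Finset.mem_filter.mpr ⟨Finset.mem_univ _, hcon⟩)) (not_lt.mpr hi.2)


lemma measurable_mcount (γ : ℝ) (w : Fin d → ℝ) :
    Measurable fun S : Fin n → (Fin d → ℝ) × ℝ => mcount γ w S := by
  have hrw : (fun S : Fin n → (Fin d → ℝ) × ℝ => mcount γ w S) =
      fun S => ∑ i : Fin n, if (S i).2 * (∑ j, (S i).1 j * w j) ≤ γ then 1 else 0 := by
    funext S
    rw [mcount, Finset.card_filter]
  rw [hrw]
  apply Finset.measurable_sum
  intro i _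
  have hmeas : Measurable fun S : Fin n → (Fin d → ℝ) × ℝ =>
      (S i).2 * (∑ j, (S i).1 j * w j) := by
    apply Measurable.mul
    · exact measurable_snd.comp (measurable_pi_apply i)
    · apply Finset.measurable_sum
      intro j _
      exact ((measurable_pi_apply j).comp
        (measurable_fst.comp (measurable_pi_apply i))).mul_const _
  exact Measurable.ite (measurableSet_le hmeas measurable_const)
    measurable_const measurable_const

lemma exists_measurable_minimizer {γ : ℝ} (hγ : 0 < γ) :
    ∃ q : (Fin n → (Fin d → ℝ) × ℝ) → Fin d → ℝ, Measurable q ∧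
      ∀ S, (∑ j, q S j ^ 2 ≤ 1) ∧ ∀ w : Fin d → ℝ, (∑ j, w j ^ 2 ≤ 1) →
        mcount γ (q S) S ≤ mcount γ w S := by
  classical
  obtain ⟨r, hr⟩ := exists_surjective_nat (Fin d → ℚ)
  set c : ℕ → (Fin d → ℝ) := fun k j => (r k j : ℝ) with hc
  set feas : ℕ → Prop := fun k => (∑ j, c k j ^ 2) ≤ 1 with hfeas
  have hex : ∀ S : Fin n → (Fin d → ℝ) × ℝ,
      ∃ k, feas k ∧ ∀ m, feas m → mcount γ (c k) S ≤ mcount γ (c m) S := by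
    intro S
    have hne : ∃ x, x ∈ {v : ℕ | ∃ k, feas k ∧ mcount γ (c k) S = v} := by
      obtain ⟨k0, hk0⟩ := hr 0
      refine ⟨mcount γ (c k0) S, k0, ?_, rfl⟩
      simp [hfeas, hc, hk0]
    obtain ⟨k, hkf, hkeq⟩ := Nat.sInf_mem hne
    exact ⟨k, hkf, fun m hm => hkeq ▸ Nat.sInf_le ⟨m, hm, rfl⟩⟩
  have hPmeas : ∀ k, MeasurableSet {S : Fin n → (Fin d → ℝ) × ℝ |
      feas k ∧ ∀ m, feas m → mcount γ (c k) S ≤ mcount γ (c m) S} := by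
    intro k
    by_cases hf : feas k
    · have hrw : {S : Fin n → (Fin d → ℝ) × ℝ |
          feas k ∧ ∀ m, feas m → mcount γ (c k) S ≤ mcount γ (c m) S} =
          ⋂ m, {S | feas m → mcount γ (c k) S ≤ mcount γ (c m) S} := by
        ext S; simp [hf]
      rw [hrw]
      apply MeasurableSet.iInter
      intro m
      by_cases hm : feas m
      · have hrw2 : {S : Fin n → (Fin d → ℝ) × ℝ |
            feas m → mcount γ (c k) S ≤ mcount γ (c m) S} =
            {S | mcount γ (c k) S ≤ mcount γ (c m) S} := by
          ext S; simp [hm]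
        rw [hrw2]
        exact measurableSet_le (measurable_mcount γ (c k)) (measurable_mcount γ (c m))
      · have hrw2 : {S : Fin n → (Fin d → ℝ) × ℝ |
            feas m → mcount γ (c k) S ≤ mcount γ (c m) S} = Set.univ := by
          ext S; simp [hm]
        rw [hrw2]; exact MeasurableSet.univ
    · have hrw : {S : Fin n → (Fin d → ℝ) × ℝ |
          feas k ∧ ∀ m, feas m → mcount γ (c k) S ≤ mcount γ (c m) S} = ∅ := by
        ext S; simp [hf]
      rw [hrw]; exact MeasurableSet.empty
  refine ⟨fun S => c (Nat.find (hex S)), ?_, ?_⟩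
  · exact Measurable.find (fun k => measurable_const) hPmeas hex
  · intro S
    have h := Nat.find_spec (hex S)
    refine ⟨h.1, fun w hw => ?_⟩
    obtain ⟨qq, hq1, hq2⟩ := exists_rat_mcount_le hγ S w hw
    obtain ⟨m, rfl⟩ := hr qq
    exact le_trans (h.2 m hq1) hq2


lemma rayleigh_of_eigenvalues {m : ℕ} {G : Matrix (Fin m) (Fin m) ℝ} (hG : G.IsHermitian)
    {lam : ℝ} (h : ∀ i, lam ≤ hG.eigenvalues i) (u : Fin m → ℝ) :
    lam * (u ⬝ᵥ u) ≤ u ⬝ᵥ (G *ᵥ u) := by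
  classical
  set U : Matrix (Fin m) (Fin m) ℝ := (hG.eigenvectorUnitary : Matrix (Fin m) (Fin m) ℝ) with hUdef
  have hU : U * star U = 1 := mem_unitaryGroup_iff.mp (hG.eigenvectorUnitary).2
  have hdiag : G - lam • 1 = U * (diagonal fun i => hG.eigenvalues i - lam) * star U := by
    conv_lhs => rw [hG.spectral_theorem, Unitary.conjStarAlgAut_apply, ← hUdef]
    have h1 : (lam • 1 : Matrix (Fin m) (Fin m) ℝ) = U * (lam • 1) * star U := by
      rw [Matrix.mul_smul, Matrix.smul_mul, Matrix.mul_one, hU]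
    rw [h1, ← Matrix.sub_mul, ← Matrix.mul_sub]
    congr 2
    rw [smul_one_eq_diagonal, diagonal_sub]
    congr 1
  have hpsd : (G - lam • 1).PosSemidef := by
    rw [hdiag]
    have hps := PosSemidef.mul_mul_conjTranspose_same
      (posSemidef_diagonal_iff.mpr fun i => sub_nonneg.mpr (h i)) U
    simpa [Matrix.star_eq_conjTranspose] using hps
  have h2 := hpsd.dotProduct_mulVec_nonneg u
  have hst : (star u : Fin m → ℝ) = u := by simp
  rw [hst] at h2
  rw [Matrix.sub_mulVec, dotProduct_sub, Matrix.smul_mulVec,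
    Matrix.one_mulVec, dotProduct_smul] at h2
  simp only [RCLike.re_to_real, smul_eq_mul] at h2
  linarith

lemma rayleigh_of_rat {m : ℕ} {G : Matrix (Fin m) (Fin m) ℝ} {lam : ℝ}
    (h : ∀ q : Fin m → ℚ, lam * ((fun j => (q j : ℝ)) ⬝ᵥ (fun j => (q j : ℝ))) ≤
      (fun j => (q j : ℝ)) ⬝ᵥ (G *ᵥ (fun j => (q j : ℝ)))) (u : Fin m → ℝ) :
    lam * (u ⬝ᵥ u) ≤ u ⬝ᵥ (G *ᵥ u) := by
  have hd : DenseRange (fun q : Fin m → ℚ => (fun j => (q j : ℝ))) := by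
    rw [Metric.denseRange_iff]
    intro y r hr
    choose q h1 h2 using fun j => exists_rat_btwn (show y j - r/2 < y j + r/2 by linarith)
    refine ⟨q, ?_⟩
    rw [dist_pi_lt_iff hr]
    intro j
    rw [Real.dist_eq, abs_lt]
    constructor <;> linarith [h1 j, h2 j]
  have hclosed : IsClosed {u : Fin m → ℝ | lam * (u ⬝ᵥ u) ≤ u ⬝ᵥ (G *ᵥ u)} := by
    apply isClosed_le
    · simp only [dotProduct]
      fun_prop
    · simp only [dotProduct, Matrix.mulVec]
      fun_prop
  have hsub : Set.range (fun q : Fin m → ℚ => (fun j => (q j : ℝ))) ⊆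
      {u : Fin m → ℝ | lam * (u ⬝ᵥ u) ≤ u ⬝ᵥ (G *ᵥ u)} := by
    rintro _ ⟨q, rfl⟩; exact h q
  exact closure_minimal hsub hclosed (hd u)


section MatMeas

variable {α : Type*} [MeasurableSpace α]

lemma measurable_det {m : ℕ} {M : α → Matrix (Fin m) (Fin m) ℝ}
    (hM : ∀ i j, Measurable fun a => M a i j) : Measurable fun a => (M a).det := by
  simp only [Matrix.det_apply']
  apply Finset.measurable_sum
  intro σ _
  exact (Finset.measurable_prod _ fun i _ => hM _ _).const_mul _

lemma measurable_adjugate {m : ℕ} {M : α → Matrix (Fin m) (Fin m) ℝ}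
    (hM : ∀ i j, Measurable fun a => M a i j) (i j : Fin m) :
    Measurable fun a => (M a).adjugate i j := by
  classical
  simp only [Matrix.adjugate_apply]
  apply measurable_det
  intro a b
  simp only [Matrix.updateRow_apply]
  by_cases h : a = j
  · simp only [h, if_pos rfl]; exact measurable_const
  · simp only [if_neg h]; exact hM a b

lemma measurable_inv_entry {m : ℕ} {M : α → Matrix (Fin m) (Fin m) ℝ}
    (hM : ∀ i j, Measurable fun a => M a i j) (i j : Fin m) :
    Measurable fun a => (M a)⁻¹ i j := by
  classical
  simp only [Matrix.inv_def, Matrix.smul_apply, Ring.inverse_eq_inv', smul_eq_mul]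
  exact ((measurable_det hM).inv).mul (measurable_adjugate hM i j)

end MatMeas

section Glue

variable {α : Type*}

/-- concatenation equivalence -/
def sumEquiv (n : ℕ) : Fin n ⊕ Fin n ≃ Fin (2 * n) :=
  finSumFinEquiv.trans (finCongr (two_mul n).symm)

/-- glue two `n`-tuples into a `2n`-tuple -/
def glue2 {n : ℕ} (a b : Fin n → α) (i : Fin (2 * n)) : α :=
  Sum.elim a b ((sumEquiv n).symm i)

@[simp] lemma glue2_inl {n : ℕ} (a b : Fin n → α) (i : Fin n) :
    glue2 a b (sumEquiv n (Sum.inl i)) = a i := by simp [glue2]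

@[simp] lemma glue2_inr {n : ℕ} (a b : Fin n → α) (i : Fin n) :
    glue2 a b (sumEquiv n (Sum.inr i)) = b i := by simp [glue2]

lemma glue2_sum_sq {n : ℕ} (a b : Fin n → ℝ) :
    ∑ i, glue2 a b i ^ 2 = (∑ i, a i ^ 2) + ∑ i, b i ^ 2 := by
  rw [← Equiv.sum_comp (sumEquiv n) (fun i => glue2 a b i ^ 2)]
  simp only [glue2, Equiv.symm_apply_apply]
  rw [Fintype.sum_sum_type]
  simp

lemma measurePreserving_glue2 {n : ℕ} [MeasurableSpace α] (ν : Measure α) [SigmaFinite ν] :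
    MeasurePreserving (fun p : (Fin n → α) × (Fin n → α) => glue2 p.1 p.2)
      ((Measure.pi fun _ : Fin n => ν).prod (Measure.pi fun _ : Fin n => ν))
      (Measure.pi fun _ : Fin (2 * n) => ν) := by
  have h1 := measurePreserving_sumPiEquivProdPi_symm
    (m := fun _ : Fin n ⊕ Fin n => ‹MeasurableSpace α›) (fun _ : Fin n ⊕ Fin n => ν)
  have h2 := measurePreserving_piCongrLeft (fun _ : Fin (2 * n) => ν) (sumEquiv n)
  have h3 := h2.comp h1
  convert h3 using 1
  funext p
  funext i
  simp only [Function.comp_apply, MeasurableEquiv.coe_piCongrLeft,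
    MeasurableEquiv.coe_sumPiEquivProdPi_symm]
  rw [Equiv.piCongrLeft_apply_eq_cast]
  simp only [glue2, Equiv.sumPiEquivProdPi_symm_apply, eq_mpr_eq_cast, cast_eq]
  cases h : (sumEquiv n).symm i <;> simp [Sum.elim, h]

end Glue


/-- the adversarial interpolating vector -/
noncomputable def wstar (γ : ℝ) {n d : ℕ} (S : Fin n → (Fin d → ℝ) × ℝ)
    (T : Fin n → Fin d → ℝ) : Fin d → ℝ :=
  ((Matrix.of (glue2 (fun i => (S i).1) T))ᵀ *
    (Matrix.of (glue2 (fun i => (S i).1) T) * (Matrix.of (glue2 (fun i => (S i).1) T))ᵀ)⁻¹) *ᵥ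
      glue2 (fun i => Real.sqrt 2 * γ * (S i).2) (fun _ => 0)

/-- the good-case condition -/
def Cond (γ : ℝ) {n d : ℕ} (S : Fin n → (Fin d → ℝ) × ℝ) (T : Fin n → Fin d → ℝ) : Prop :=
  (∑ j, wstar γ S T j ^ 2 ≤ 1) ∧
  (∀ i, γ < (S i).2 * ∑ j, (S i).1 j * wstar γ S T j) ∧
  (∀ i, ∑ j, T i j * wstar γ S T j = 0)

lemma aux_margin {γ y : ℝ} (hγ : 0 < γ) (h12 : 1 < Real.sqrt 2) (hy : y = 1 ∨ y = -1) :
    γ < y * (Real.sqrt 2 * γ * y) := by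
  rcases hy with h | h <;> rw [h] <;> nlinarith

lemma cond_of_rayleigh {γ : ℝ} (hγ : 0 < γ) (hn : 0 < n)
    (S : Fin n → (Fin d → ℝ) × ℝ) (T : Fin n → Fin d → ℝ)
    (hlab : ∀ i, (S i).2 = 1 ∨ (S i).2 = -1)
    (hray : ∀ u : Fin (2 * n) → ℝ,
      (2 * (n : ℝ)) * γ ^ 2 * (u ⬝ᵥ u) ≤ u ⬝ᵥ ((Matrix.of (glue2 (fun i => (S i).1) T) *
        (Matrix.of (glue2 (fun i => (S i).1) T))ᵀ) *ᵥ u)) :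
    Cond γ S T := by
  classical
  set X : Matrix (Fin (2 * n)) (Fin d) ℝ := Matrix.of (glue2 (fun i => (S i).1) T) with hX
  set G := X * Xᵀ with hG
  set lam : ℝ := (2 * (n : ℝ)) * γ ^ 2 with hlam
  have hn' : (0 : ℝ) < n := by exact_mod_cast hn
  have hlam0 : 0 < lam := by rw [hlam]; positivity
  set v : Fin (2 * n) → ℝ := glue2 (fun i => Real.sqrt 2 * γ * (S i).2) (fun _ => 0) with hv
  have hdet : G.det ≠ 0 := by
    intro h0
    obtain ⟨z, hz0, hz⟩ := (Matrix.exists_mulVec_eq_zero_iff).mpr h0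
    have h1 := hray z
    rw [hz, dotProduct_zero] at h1
    have hzz : 0 < z ⬝ᵥ z := by
      have hzz' : z ⬝ᵥ z = ∑ i, z i ^ 2 := by simp [dotProduct, pow_two]
      rw [hzz']
      obtain ⟨i, hi⟩ := Function.ne_iff.mp hz0
      have hi' : z i ≠ 0 := by simpa using hi
      exact Finset.sum_pos' (fun i _ => sq_nonneg _)
        ⟨i, Finset.mem_univ i, by positivity⟩
    nlinarith
  have hunit : IsUnit G.det := isUnit_iff_ne_zero.mpr hdet
  have hGinv : G * G⁻¹ = 1 := Matrix.mul_nonsing_inv G hunit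
  set u : Fin (2 * n) → ℝ := G⁻¹ *ᵥ v with hu
  have hGu : G *ᵥ u = v := by rw [hu, Matrix.mulVec_mulVec, hGinv, Matrix.one_mulVec]
  have hwdef : wstar γ S T = Xᵀ *ᵥ u := by
    rw [wstar, hu, Matrix.mulVec_mulVec]
  have hXw : X *ᵥ wstar γ S T = v := by
    rw [hwdef, Matrix.mulVec_mulVec, ← hG, hGu]
  have hmar : ∀ i : Fin n, (∑ j, (S i).1 j * wstar γ S T j) = Real.sqrt 2 * γ * (S i).2 := by
    intro i
    have h1 : (X *ᵥ wstar γ S T) (sumEquiv n (Sum.inl i)) = v (sumEquiv n (Sum.inl i)) := by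
      rw [hXw]
    have hrow : ∀ j, X (sumEquiv n (Sum.inl i)) j = (S i).1 j := by
      intro j
      show (glue2 (fun i => (S i).1) T (sumEquiv n (Sum.inl i))) j = _
      rw [glue2_inl]
    have hvi : v (sumEquiv n (Sum.inl i)) = Real.sqrt 2 * γ * (S i).2 := by
      rw [hv, glue2_inl]
    rw [hvi] at h1
    rw [← h1]
    simp only [Matrix.mulVec, dotProduct]
    exact Finset.sum_congr rfl fun j _ => by rw [hrow j]
  have htest : ∀ i : Fin n, (∑ j, T i j * wstar γ S T j) = 0 := by
    intro i
    have h1 : (X *ᵥ wstar γ S T) (sumEquiv n (Sum.inr i)) = v (sumEquiv n (Sum.inr i)) := by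
      rw [hXw]
    have hrow : ∀ j, X (sumEquiv n (Sum.inr i)) j = T i j := by
      intro j
      show (glue2 (fun i => (S i).1) T (sumEquiv n (Sum.inr i))) j = _
      rw [glue2_inr]
    have hvi : v (sumEquiv n (Sum.inr i)) = 0 := by rw [hv, glue2_inr]
    rw [hvi] at h1
    rw [← h1]
    simp only [Matrix.mulVec, dotProduct]
    exact Finset.sum_congr rfl fun j _ => by rw [hrow j]
  have h12 : (1 : ℝ) < Real.sqrt 2 := by
    rw [show (1 : ℝ) = Real.sqrt 1 by rw [Real.sqrt_one]]
    exact Real.sqrt_lt_sqrt (by norm_num) (by norm_num)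
  refine ⟨?_, ?_, htest⟩
  · -- norm bound
    have hwb : (∑ j, wstar γ S T j ^ 2) = u ⬝ᵥ v := by
      have h1 : (∑ j, wstar γ S T j ^ 2) = wstar γ S T ⬝ᵥ wstar γ S T := by
        simp [dotProduct, pow_two]
      rw [h1, hwdef]
      calc (Xᵀ *ᵥ u) ⬝ᵥ (Xᵀ *ᵥ u) = ((Xᵀ *ᵥ u) ᵥ* Xᵀ) ⬝ᵥ u := dotProduct_mulVec _ _ _
        _ = (X *ᵥ (Xᵀ *ᵥ u)) ⬝ᵥ u := by rw [Matrix.vecMul_transpose]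
        _ = ((X * Xᵀ) *ᵥ u) ⬝ᵥ u := by rw [Matrix.mulVec_mulVec]
        _ = v ⬝ᵥ u := by rw [← hG, hGu]
        _ = u ⬝ᵥ v := dotProduct_comm _ _
    have hvv : v ⬝ᵥ v = lam := by
      have h1 : v ⬝ᵥ v = ∑ i, v i ^ 2 := by simp [dotProduct, pow_two]
      rw [h1, hv, glue2_sum_sq]
      have h2 : ∀ i : Fin n, (Real.sqrt 2 * γ * (S i).2) ^ 2 = 2 * γ ^ 2 := by
        intro i
        rcases hlab i with h | h <;> rw [h] <;>
          nlinarith [Real.sq_sqrt (by norm_num : (0:ℝ) ≤ 2)]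
      rw [Finset.sum_congr rfl fun i _ => h2 i]
      simp only [Finset.sum_const, Finset.card_univ, Fintype.card_fin, nsmul_eq_mul]
      rw [hlam]; push_cast; ring
    have hray_u := hray u
    rw [hGu] at hray_u
    have hcs := Finset.sum_mul_sq_le_sq_mul_sq Finset.univ u v
    have hdd : u ⬝ᵥ v = ∑ i, u i * v i := rfl
    have huu : u ⬝ᵥ u = ∑ i, u i ^ 2 := by simp [dotProduct, pow_two]
    have hvv2 : v ⬝ᵥ v = ∑ i, v i ^ 2 := by simp [dotProduct, pow_two]
    have hb0 : 0 ≤ u ⬝ᵥ v := by rw [← hwb]; exact Finset.sum_nonneg fun j _ => sq_nonneg _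
    have hcs' : (u ⬝ᵥ v) ^ 2 ≤ (u ⬝ᵥ u) * lam := by
      rw [hdd, huu, ← hvv, hvv2]; exact hcs
    have hbb : (u ⬝ᵥ v) ^ 2 ≤ u ⬝ᵥ v := le_trans hcs' (by rw [mul_comm]; exact hray_u)
    rw [hwb]
    nlinarith [hbb, hb0]
  · intro i
    rw [hmar i]
    exact aux_margin hγ h12 (hlab i)
  

section Meas

variable (γ : ℝ)

lemma measurable_wstar (j : Fin d) :
    Measurable fun p : (Fin n → (Fin d → ℝ) × ℝ) × (Fin n → (Fin d → ℝ) × ℝ) =>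
      wstar γ p.1 (fun i => (p.2 i).1) j := by
  classical
  have hXe : ∀ (i : Fin (2 * n)) (b : Fin d),
      Measurable fun p : (Fin n → (Fin d → ℝ) × ℝ) × (Fin n → (Fin d → ℝ) × ℝ) =>
        Matrix.of (glue2 (fun i' => (p.1 i').1) (fun i' => (p.2 i').1)) i b := by
    intro i b
    show Measurable fun p : (Fin n → (Fin d → ℝ) × ℝ) × (Fin n → (Fin d → ℝ) × ℝ) =>
      (glue2 (fun i' => (p.1 i').1) (fun i' => (p.2 i').1) i) b
    unfold glue2
    cases h : (sumEquiv n).symm i with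
    | inl s =>
        simp only [h, Sum.elim_inl]
        exact (measurable_pi_apply b).comp
          (measurable_fst.comp ((measurable_pi_apply s).comp measurable_fst))
    | inr s =>
        simp only [h, Sum.elim_inr]
        exact (measurable_pi_apply b).comp
          (measurable_fst.comp ((measurable_pi_apply s).comp measurable_snd))
  have hGe : ∀ a b' : Fin (2 * n),
      Measurable fun p : (Fin n → (Fin d → ℝ) × ℝ) × (Fin n → (Fin d → ℝ) × ℝ) =>
        (Matrix.of (glue2 (fun i' => (p.1 i').1) (fun i' => (p.2 i').1)) *
          (Matrix.of (glue2 (fun i' => (p.1 i').1) (fun i' => (p.2 i').1)))ᵀ) a b' := by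
    intro a b'
    simp only [Matrix.mul_apply, Matrix.transpose_apply]
    exact Finset.measurable_sum _ fun k _ => (hXe a k).mul (hXe b' k)
  have hGinv : ∀ a b' : Fin (2 * n),
      Measurable fun p : (Fin n → (Fin d → ℝ) × ℝ) × (Fin n → (Fin d → ℝ) × ℝ) =>
        (Matrix.of (glue2 (fun i' => (p.1 i').1) (fun i' => (p.2 i').1)) *
          (Matrix.of (glue2 (fun i' => (p.1 i').1) (fun i' => (p.2 i').1)))ᵀ)⁻¹ a b' :=
    fun a b' => measurable_inv_entry hGe a b'
  have hve : ∀ a : Fin (2 * n),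
      Measurable fun p : (Fin n → (Fin d → ℝ) × ℝ) × (Fin n → (Fin d → ℝ) × ℝ) =>
        glue2 (fun i => Real.sqrt 2 * γ * ((p.1 i).2)) (fun _ => (0:ℝ)) a := by
    intro a
    unfold glue2
    cases h : (sumEquiv n).symm a with
    | inl s =>
        simp only [h, Sum.elim_inl]
        exact (measurable_snd.comp ((measurable_pi_apply s).comp measurable_fst)).const_mul _
    | inr s =>
        simp only [h, Sum.elim_inr]
        exact measurable_const
  show Measurable fun p : (Fin n → (Fin d → ℝ) × ℝ) × (Fin n → (Fin d → ℝ) × ℝ) =>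
    wstar γ p.1 (fun i => (p.2 i).1) j
  unfold wstar
  simp only [Matrix.mulVec, dotProduct, Matrix.mul_apply, Matrix.transpose_apply]
  apply Finset.measurable_sum
  intro a _
  exact (Finset.measurable_sum _ fun b _ => (hXe b j).mul (hGinv b a)).mul (hve a)

lemma measurable_cond_set :
    MeasurableSet {p : (Fin n → (Fin d → ℝ) × ℝ) × (Fin n → (Fin d → ℝ) × ℝ) |
      Cond γ p.1 (fun i => (p.2 i).1)} := by
  have h1 : MeasurableSet {p : (Fin n → (Fin d → ℝ) × ℝ) × (Fin n → (Fin d → ℝ) × ℝ) |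
      ∑ j, wstar γ p.1 (fun i => (p.2 i).1) j ^ 2 ≤ 1} := by
    apply measurableSet_le _ measurable_const
    exact Finset.measurable_sum _ fun j _ => (measurable_wstar γ j).pow_const 2
  have h2 : ∀ i : Fin n, MeasurableSet {p : (Fin n → (Fin d → ℝ) × ℝ) ×
      (Fin n → (Fin d → ℝ) × ℝ) |
      γ < (p.1 i).2 * ∑ j, (p.1 i).1 j * wstar γ p.1 (fun i' => (p.2 i').1) j} := by
    intro i
    apply measurableSet_lt measurable_const
    apply Measurable.mul
    · exact measurable_snd.comp ((measurable_pi_apply i).comp measurable_fst)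
    · apply Finset.measurable_sum
      intro j _
      exact Measurable.mul (by exact ((measurable_pi_apply j).comp
        (measurable_fst.comp ((measurable_pi_apply i).comp measurable_fst))))
        (measurable_wstar γ j)
  have h3 : ∀ i : Fin n, MeasurableSet {p : (Fin n → (Fin d → ℝ) × ℝ) ×
      (Fin n → (Fin d → ℝ) × ℝ) |
      (∑ j, (p.2 i).1 j * wstar γ p.1 (fun i' => (p.2 i').1) j) = 0} := by
    intro i
    have hf : Measurable fun p : (Fin n → (Fin d → ℝ) × ℝ) × (Fin n → (Fin d → ℝ) × ℝ) =>
        ∑ j, (p.2 i).1 j * wstar γ p.1 (fun i' => (p.2 i').1) j := by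
      apply Finset.measurable_sum
      intro j _
      exact Measurable.mul (by exact ((measurable_pi_apply j).comp
        (measurable_fst.comp ((measurable_pi_apply i).comp measurable_snd))))
        (measurable_wstar γ j)
    exact hf (measurableSet_singleton 0)
  have hrw : {p : (Fin n → (Fin d → ℝ) × ℝ) × (Fin n → (Fin d → ℝ) × ℝ) |
      Cond γ p.1 (fun i => (p.2 i).1)} =
      {p : (Fin n → (Fin d → ℝ) × ℝ) × (Fin n → (Fin d → ℝ) × ℝ) |
        ∑ j, wstar γ p.1 (fun i => (p.2 i).1) j ^ 2 ≤ 1} ∩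
      ((⋂ i : Fin n, {p | γ < (p.1 i).2 * ∑ j, (p.1 i).1 j *
          wstar γ p.1 (fun i' => (p.2 i').1) j}) ∩
       (⋂ i : Fin n, {p | (∑ j, (p.2 i).1 j * wstar γ p.1 (fun i' => (p.2 i').1) j) = 0})) := by
    ext p
    simp only [Cond, Set.mem_setOf_eq, Set.mem_inter_iff, Set.mem_iInter]
  rw [hrw]
  exact h1.inter ((MeasurableSet.iInter h2).inter (MeasurableSet.iInter h3))

lemma measurable_loss_comp {w : (Fin n → (Fin d → ℝ) × ℝ) × (Fin n → (Fin d → ℝ) × ℝ) →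
      Fin d → ℝ} (hw : ∀ j, Measurable fun p => w p j) (c : ℝ) :
    Measurable fun p : (Fin n → (Fin d → ℝ) × ℝ) × (Fin n → (Fin d → ℝ) × ℝ) =>
      empMarginLoss c (w p) p.2 := by
  classical
  have hrw : (fun p : (Fin n → (Fin d → ℝ) × ℝ) × (Fin n → (Fin d → ℝ) × ℝ) =>
      empMarginLoss c (w p) p.2) = fun p =>
      (∑ i : Fin n, if (p.2 i).2 * (∑ j, (p.2 i).1 j * w p j) ≤ c then (1:ℝ) else 0) / n := by
    funext p
    rw [empMarginLoss, Finset.card_filter]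
    push_cast
    rfl
  rw [hrw]
  apply Measurable.div_const
  apply Finset.measurable_sum
  intro i _
  have hmeas : Measurable fun p : (Fin n → (Fin d → ℝ) × ℝ) × (Fin n → (Fin d → ℝ) × ℝ) =>
      (p.2 i).2 * (∑ j, (p.2 i).1 j * w p j) := by
    apply Measurable.mul
    · exact measurable_snd.comp ((measurable_pi_apply i).comp measurable_snd)
    · apply Finset.measurable_sum
      intro j _
      exact Measurable.mul (by exact ((measurable_pi_apply j).comp
        (measurable_fst.comp ((measurable_pi_apply i).comp measurable_snd)))) (hw j)
  exact Measurable.ite (measurableSet_le hmeas measurable_const)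
    measurable_const measurable_const

end Meas


lemma empMarginLoss_nonneg (c : ℝ) (w : Fin d → ℝ) (S : Fin n → (Fin d → ℝ) × ℝ) :
    0 ≤ empMarginLoss c w S := by
  rw [empMarginLoss]; positivity

lemma empMarginLoss_le_one (hn : 0 < n) (c : ℝ) (w : Fin d → ℝ)
    (S : Fin n → (Fin d → ℝ) × ℝ) : empMarginLoss c w S ≤ 1 := by
  rw [empMarginLoss, div_le_one (by exact_mod_cast hn)]
  calc ((Finset.univ.filter fun i : Fin n =>
        (S i).2 * (∑ j, (S i).1 j * w j) ≤ c).card : ℝ)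
      ≤ ((Finset.univ : Finset (Fin n)).card : ℝ) := by
        exact_mod_cast Finset.card_filter_le _ _
    _ = n := by simp

lemma empMarginLoss_eq_mcount (c : ℝ) (w : Fin d → ℝ) (S : Fin n → (Fin d → ℝ) × ℝ) :
    empMarginLoss c w S = (mcount c w S : ℝ) / n := rfl

end NotLearnedAux

open NotLearnedAux

/-- Let `X_S` be the `2n × d` matrix of an i.i.d. sample of size
`2n` from the marginal `D_X`.  If with probability at least `η` all eigenvalues of
the Gram matrix `X_S X_Sᵀ` are at least `2nγ²` (i.e. `λ_{2n}(X_S X_Sᵀ) ≥ 2nγ²`),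
then some margin-error minimization algorithm has expected test misclassification
error at least `η/2`. -/
theorem eigenvalue_implies_not_learned
    (d n : ℕ) (hn : 0 < n) (γ η : ℝ) (hγ : 0 < γ) (hη : η ∈ Set.Icc (0 : ℝ) 1)
    (D : Measure ((Fin d → ℝ) × ℝ)) [IsProbabilityMeasure D]
    (hlabels : ∀ᵐ p ∂D, p.2 = 1 ∨ p.2 = -1)
    (heig : ENNReal.ofReal η ≤
      (Measure.pi fun _ : Fin (2 * n) => D.map Prod.fst)
        {x : Fin (2 * n) → Fin d → ℝ |
          ∀ h : ((Matrix.of x) * (Matrix.of x)ᵀ).IsHermitian,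
            ∀ i, (2 * n : ℝ) * γ ^ 2 ≤ h.eigenvalues i}) :
    ∃ A : (Fin n → (Fin d → ℝ) × ℝ) → (Fin n → Fin d → ℝ) → (Fin d → ℝ),
      IsMarginErrorMinimizer γ A ∧
      η / 2 ≤ ∫ p : (Fin n → (Fin d → ℝ) × ℝ) × (Fin n → (Fin d → ℝ) × ℝ),
          empMarginLoss 0 (A p.1 (fun i => (p.2 i).1)) p.2
          ∂((Measure.pi fun _ : Fin n => D).prod (Measure.pi fun _ : Fin n => D)) := by
  classical
  obtain ⟨hη0, hη1⟩ := hη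
  have hn0 : (0 : ℝ) < n := by exact_mod_cast hn
  obtain ⟨q, hqmeas, hq⟩ := exists_measurable_minimizer (n := n) (d := d) hγ
  set μ := ((Measure.pi fun _ : Fin n => D).prod (Measure.pi fun _ : Fin n => D)) with hμdef
  haveI : IsProbabilityMeasure (D.map Prod.fst) :=
    Measure.isProbabilityMeasure_map measurable_fst.aemeasurable
  haveI : SigmaFinite (Measure.pi fun _ : Fin n => D) := inferInstance
  refine ⟨fun S T => if Cond γ S T then wstar γ S T else q S, ?_, ?_⟩
  · -- minimizer property
    intro S T
    beta_reduce
    by_cases h : Cond γ S T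
    · constructor
      · rw [if_pos h]; exact h.1
      · intro w hw
        have hzero : empMarginLoss γ (if Cond γ S T then wstar γ S T else q S) S = 0 := by
          rw [if_pos h, empMarginLoss]
          have hfe : (Finset.univ.filter fun i : Fin n =>
              (S i).2 * (∑ j, (S i).1 j * wstar γ S T j) ≤ γ) = ∅ := by
            rw [Finset.filter_eq_empty_iff]
            intro i _
            exact not_le.mpr (h.2.1 i)
          rw [hfe]
          simp
        rw [hzero]
        exact empMarginLoss_nonneg γ w S
    · constructor
      · rw [if_neg h]; exact (hq S).1
      · intro w hw
        rw [if_neg h, empMarginLoss_eq_mcount, empMarginLoss_eq_mcount]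
        have hle : (mcount γ (q S) S : ℝ) ≤ mcount γ w S := by
          exact_mod_cast (hq S).2 w hw
        gcongr
  · -- integral bound
    set lam : ℝ := (2 * n : ℝ) * γ ^ 2 with hlamdef
    set E' : Set (Fin (2 * n) → Fin d → ℝ) := {x | ∀ qq : Fin (2 * n) → ℚ,
      (2 * (n : ℝ)) * γ ^ 2 * ((fun j => (qq j : ℝ)) ⬝ᵥ (fun j => (qq j : ℝ))) ≤
        (fun j => (qq j : ℝ)) ⬝ᵥ ((Matrix.of x * (Matrix.of x)ᵀ) *ᵥ (fun j => (qq j : ℝ)))}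
      with hE'def
    have hE'meas : MeasurableSet E' := by
      have hrw : E' = ⋂ qq : Fin (2 * n) → ℚ, {x : Fin (2 * n) → Fin d → ℝ |
          (2 * (n : ℝ)) * γ ^ 2 * ((fun j => (qq j : ℝ)) ⬝ᵥ (fun j => (qq j : ℝ))) ≤
          (fun j => (qq j : ℝ)) ⬝ᵥ ((Matrix.of x * (Matrix.of x)ᵀ) *ᵥ (fun j => (qq j : ℝ)))} := by
        ext x; simp only [hE'def, Set.mem_setOf_eq, Set.mem_iInter]
      rw [hrw]
      apply MeasurableSet.iInter
      intro qq
      apply measurableSet_le measurable_const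
      simp only [dotProduct, Matrix.mulVec, Matrix.mul_apply, Matrix.transpose_apply]
      apply Finset.measurable_sum
      intro i _
      apply Measurable.const_mul
      apply Finset.measurable_sum
      intro k _
      apply Measurable.mul_const
      apply Finset.measurable_sum
      intro b _
      exact Measurable.mul (by exact (measurable_pi_apply b).comp (measurable_pi_apply i))
        (by exact (measurable_pi_apply b).comp (measurable_pi_apply k))
    have hEsub : {x : Fin (2 * n) → Fin d → ℝ |
        ∀ h : ((Matrix.of x) * (Matrix.of x)ᵀ).IsHermitian,
          ∀ i, (2 * n : ℝ) * γ ^ 2 ≤ h.eigenvalues i} ⊆ E' := by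
      intro x hx qq
      have hherm : ((Matrix.of x) * (Matrix.of x)ᵀ).IsHermitian := by
        rw [← Matrix.conjTranspose_eq_transpose_of_trivial]
        exact Matrix.isHermitian_mul_conjTranspose_self _
      exact rayleigh_of_eigenvalues hherm (hx hherm) _
    have hpiE' : ENNReal.ofReal η ≤ (Measure.pi fun _ : Fin (2 * n) => D.map Prod.fst) E' :=
      le_trans heig (measure_mono hEsub)
    set Φ : ((Fin n → (Fin d → ℝ) × ℝ) × (Fin n → (Fin d → ℝ) × ℝ)) →
        (Fin (2 * n) → Fin d → ℝ) :=
      fun p => glue2 (fun i => (p.1 i).1) (fun i => (p.2 i).1) with hΦdef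
    have hm : MeasurePreserving (fun s : Fin n → (Fin d → ℝ) × ℝ => fun i => (s i).1)
        (Measure.pi fun _ : Fin n => D) (Measure.pi fun _ : Fin n => D.map Prod.fst) :=
      measurePreserving_pi _ _ (fun i => ⟨measurable_fst, rfl⟩)
    have hΦ : MeasurePreserving Φ μ (Measure.pi fun _ : Fin (2 * n) => D.map Prod.fst) := by
      have h1 := (measurePreserving_glue2 (n := n) (D.map Prod.fst)).comp (hm.prod hm)
      exact h1
    have hpre : ENNReal.ofReal η ≤ μ (Φ ⁻¹' E') := by
      rw [hΦ.measure_preimage hE'meas.nullMeasurableSet]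
      exact hpiE'
    set L : Set ((Fin n → (Fin d → ℝ) × ℝ) × (Fin n → (Fin d → ℝ) × ℝ)) :=
      {p | ∀ i, (p.1 i).2 = 1 ∨ (p.1 i).2 = -1} with hLdef
    have hLnull : μ Lᶜ = 0 := by
      set B : Set ((Fin d → ℝ) × ℝ) := {e | ¬(e.2 = 1 ∨ e.2 = -1)} with hBdef
      have hBmeas : MeasurableSet B := by
        have hb : B = ((fun e : (Fin d → ℝ) × ℝ => e.2) ⁻¹' ({1} ∪ {-1}))ᶜ := by
          ext e; simp [hBdef]; tauto
        rw [hb]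
        exact (measurable_snd ((measurableSet_singleton (1:ℝ)).union
          (measurableSet_singleton (-1:ℝ)))).compl
      have hDB : D B = 0 := ae_iff.mp hlabels
      have hLc : Lᶜ = ⋃ i : Fin n,
          (fun p : (Fin n → (Fin d → ℝ) × ℝ) × (Fin n → (Fin d → ℝ) × ℝ) => p.1 i) ⁻¹' B := by
        ext p
        simp [hLdef, hBdef, not_forall]
      rw [hLc]
      apply measure_iUnion_null
      intro i
      have hNmeas : MeasurableSet (Function.eval i ⁻¹' B) :=
        measurable_pi_apply (X := fun _ : Fin n => (Fin d → ℝ) × ℝ) i hBmeas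
      have hN : (Measure.pi fun _ : Fin n => D) (Function.eval i ⁻¹' B) = 0 :=
        Measure.pi_eval_preimage_null _ hDB
      have hsplit : (fun p : (Fin n → (Fin d → ℝ) × ℝ) × (Fin n → (Fin d → ℝ) × ℝ) =>
          p.1 i) ⁻¹' B = Prod.fst ⁻¹' (Function.eval i ⁻¹' B) := rfl
      rw [hsplit, ← Measure.map_apply measurable_fst hNmeas, Measure.map_fst_prod]
      simp [hN]
    set Cset : Set ((Fin n → (Fin d → ℝ) × ℝ) × (Fin n → (Fin d → ℝ) × ℝ)) :=
      {p | Cond γ p.1 (fun i => (p.2 i).1)} with hCdef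
    have hCmeas : MeasurableSet Cset := measurable_cond_set (n := n) (d := d) γ
    have hsub : Φ ⁻¹' E' ∩ L ⊆ Cset := by
      rintro p ⟨hp1, hp2⟩
      show Cond γ p.1 (fun i => (p.2 i).1)
      apply cond_of_rayleigh hγ hn p.1 (fun i => (p.2 i).1) hp2
      intro u
      exact rayleigh_of_rat (fun qq => hp1 qq) u
    have hμC : ENNReal.ofReal η ≤ μ Cset := by
      calc ENNReal.ofReal η ≤ μ (Φ ⁻¹' E') := hpre
        _ = μ (Φ ⁻¹' E' ∩ L) := (measure_inter_conull hLnull).symm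
        _ ≤ μ Cset := measure_mono hsub
    set g : ((Fin n → (Fin d → ℝ) × ℝ) × (Fin n → (Fin d → ℝ) × ℝ)) → ℝ :=
      fun p => if Cond γ p.1 (fun i => (p.2 i).1)
        then empMarginLoss 0 (wstar γ p.1 (fun i => (p.2 i).1)) p.2
        else empMarginLoss 0 (q p.1) p.2 with hgdef
    have hgmeas : Measurable g := by
      apply Measurable.ite hCmeas
      · exact measurable_loss_comp (fun j => measurable_wstar γ j) 0
      · exact measurable_loss_comp
          (fun j => (measurable_pi_apply j).comp (hqmeas.comp measurable_fst)) 0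
    have hg0 : ∀ p, 0 ≤ g p := by
      intro p
      simp only [hgdef]
      by_cases h : Cond γ p.1 (fun i => (p.2 i).1) <;>
        simp only [h, if_true, if_false] <;>
        exact empMarginLoss_nonneg _ _ _
    have hg1 : ∀ p, g p ≤ 1 := by
      intro p
      simp only [hgdef]
      by_cases h : Cond γ p.1 (fun i => (p.2 i).1) <;>
        simp only [h, if_true, if_false] <;>
        exact empMarginLoss_le_one hn _ _ _
    have hint : Integrable g μ := by
      apply Integrable.mono' (integrable_const (1:ℝ)) hgmeas.aestronglyMeasurable
      apply ae_of_all
      intro p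
      rw [Real.norm_eq_abs, abs_of_nonneg (hg0 p)]
      exact hg1 p
    have honC : ∀ p ∈ Cset, g p = 1 := by
      intro p hp
      have hpc : Cond γ p.1 (fun i => (p.2 i).1) := hp
      simp only [hgdef]
      rw [if_pos hpc, empMarginLoss]
      have hfilter : (Finset.univ.filter fun i : Fin n =>
          (p.2 i).2 * (∑ j, (p.2 i).1 j * wstar γ p.1 (fun i' => (p.2 i').1) j) ≤ 0) =
          Finset.univ := by
        apply Finset.filter_true_of_mem
        intro i _
        rw [hpc.2.2 i, mul_zero]
      rw [hfilter]
      simp only [Finset.card_univ, Fintype.card_fin]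
      exact div_self (ne_of_gt hn0)
    have hμCreal : η ≤ (μ Cset).toReal := by
      have h1 : (ENNReal.ofReal η).toReal ≤ (μ Cset).toReal :=
        ENNReal.toReal_mono (measure_ne_top μ _) hμC
      rwa [ENNReal.toReal_ofReal hη0] at h1
    have hint2 : (μ Cset).toReal ≤ ∫ p, g p ∂μ := by
      have hc1 : (μ Cset).toReal = ∫ _ in Cset, (1:ℝ) ∂μ := by
        rw [setIntegral_const]; simp; rfl
      have hc2 : ∫ _ in Cset, (1:ℝ) ∂μ = ∫ p in Cset, g p ∂μ :=
        setIntegral_congr_fun hCmeas fun p hp => (honC p hp).symm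
      have hc3 : ∫ p in Cset, g p ∂μ ≤ ∫ p, g p ∂μ :=
        setIntegral_le_integral hint (ae_of_all _ fun p => hg0 p)
      rw [hc1, hc2]; exact hc3
    calc η / 2 ≤ η := by linarith
      _ ≤ (μ Cset).toReal := hμCreal
      _ ≤ ∫ p, g p ∂μ := hint2
      _ = _ := by
          apply integral_congr_ae
          apply ae_of_all
          intro p
          simp only [hgdef]
          by_cases h : Cond γ p.1 (fun i => (p.2 i).1) <;> simp only [h, if_true, if_false]
end

section
/- Let X be an m×d real matrix such that XXᵀ is invertible, and let Y be an m×n real matrix with XXᵀ = YYᵀ. Let r ∈ ℝ^m and suppose there exists w̃ ∈ ℝ^n with Y w̃ = r. Then there exists w ∈ ℝ^d such that X w = r and ‖w‖₂ = ‖P w̃‖₂, where P = Yᵀ(YYᵀ)⁻¹Y is the orthogonal projection onto the row space of Y. -/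
open Matrix

lemma dot_aux {m k : ℕ} (M : Matrix (Fin m) (Fin k) ℝ) (A : Matrix (Fin m) (Fin m) ℝ)
    (hA : M * Mᵀ = A) (hU : IsUnit A) (hs : Aᵀ = A) (r : Fin m → ℝ) :
    (Mᵀ * A⁻¹).mulVec r ⬝ᵥ (Mᵀ * A⁻¹).mulVec r = r ⬝ᵥ A⁻¹.mulVec r := by
  have hdet : IsUnit A.det := (Matrix.isUnit_iff_isUnit_det A).mp hU
  have hAinvT : A⁻¹ᵀ = A⁻¹ := by rw [Matrix.transpose_nonsing_inv, hs]
  have key : (Mᵀ * A⁻¹)ᵀ * (Mᵀ * A⁻¹) = A⁻¹ := by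
    rw [Matrix.transpose_mul, Matrix.transpose_transpose, hAinvT]
    calc A⁻¹ * M * (Mᵀ * A⁻¹) = A⁻¹ * (M * Mᵀ) * A⁻¹ := by
          rw [Matrix.mul_assoc, Matrix.mul_assoc, Matrix.mul_assoc]
      _ = A⁻¹ := by rw [hA, Matrix.mul_assoc, Matrix.mul_nonsing_inv A hdet,
          Matrix.mul_one]
  calc (Mᵀ * A⁻¹).mulVec r ⬝ᵥ (Mᵀ * A⁻¹).mulVec r
      = Matrix.vecMul ((Mᵀ * A⁻¹).mulVec r) (Mᵀ * A⁻¹) ⬝ᵥ r :=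
        Matrix.dotProduct_mulVec _ _ _
    _ = ((Mᵀ * A⁻¹)ᵀ * (Mᵀ * A⁻¹)).mulVec r ⬝ᵥ r := by
        rw [← Matrix.mulVec_transpose, Matrix.mulVec_mulVec]
    _ = r ⬝ᵥ A⁻¹.mulVec r := by rw [key, dotProduct_comm]

/-- If `X Xᵀ` is invertible, `X Xᵀ = Y Yᵀ`, and `Y w̃ = r`, then
there is `w` with `X w = r` and `‖w‖ = ‖P w̃‖`, where `P = Yᵀ (Y Yᵀ)⁻¹ Y` is the
orthogonal projection onto the row space of `Y`. -/
theorem exists_separator_same_norm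
    (m d n : ℕ)
    (X : Matrix (Fin m) (Fin d) ℝ) (Y : Matrix (Fin m) (Fin n) ℝ)
    (hinv : IsUnit (X * Xᵀ))
    (hXY : X * Xᵀ = Y * Yᵀ)
    (r : Fin m → ℝ) (wt : Fin n → ℝ) (hwt : Y.mulVec wt = r) :
    ∃ w : Fin d → ℝ, X.mulVec w = r ∧
      Real.sqrt (∑ j, (w j) ^ 2) =
        Real.sqrt (∑ j, ((Yᵀ * (Y * Yᵀ)⁻¹ * Y).mulVec wt j) ^ 2) := by
  set A := X * Xᵀ with hA
  have hdet : IsUnit A.det := (Matrix.isUnit_iff_isUnit_det A).mp hinv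
  have hs : Aᵀ = A := by rw [hA, Matrix.transpose_mul, Matrix.transpose_transpose]
  refine ⟨(Xᵀ * A⁻¹).mulVec r, ?_, ?_⟩
  · rw [Matrix.mulVec_mulVec, ← Matrix.mul_assoc, ← hA,
      Matrix.mul_nonsing_inv A hdet, Matrix.one_mulVec]
  · have hP : (Yᵀ * (Y * Yᵀ)⁻¹ * Y).mulVec wt = (Yᵀ * A⁻¹).mulVec r := by
      rw [← hXY, ← Matrix.mulVec_mulVec, hwt]
    rw [hP]
    have h1 := dot_aux X A rfl hinv hs r
    have h2 := dot_aux Y A hXY.symm hinv hs r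
    have : ∑ j, ((Xᵀ * A⁻¹).mulVec r j) ^ 2 = ∑ j, ((Yᵀ * A⁻¹).mulVec r j) ^ 2 := by
      have e1 : ∑ j, ((Xᵀ * A⁻¹).mulVec r j) ^ 2
          = (Xᵀ * A⁻¹).mulVec r ⬝ᵥ (Xᵀ * A⁻¹).mulVec r := by
        simp [dotProduct, sq]
      have e2 : ∑ j, ((Yᵀ * A⁻¹).mulVec r j) ^ 2
          = (Yᵀ * A⁻¹).mulVec r ⬝ᵥ (Yᵀ * A⁻¹).mulVec r := by
        simp [dotProduct, sq]
      rw [e1, e2, h1, h2]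
    rw [this]
end

section
/- Let m be a positive integer and let (r_y)_{y ∈ {±1}^m} be a family of vectors in ℝ^m such that for every y ∈ {±1}^m and every i ∈ [m], r_y[i]·y[i] ≥ 1. Then every sign vector y ∈ {±1}^m lies in the convex hull of the set {r_y : y ∈ {±1}^m}. -/
/-- If for every sign vector `y ∈ {±1}^m` we have a vector `r y`
with `(r y)ᵢ · yᵢ ≥ 1` for all `i`, then every sign vector lies in the convex hull
of the family `{r y : y ∈ {±1}^m}`. -/
theorem sign_vectors_mem_convexHull
    (m : ℕ) (hm : 0 < m)
    (r : (Fin m → ℝ) → (Fin m → ℝ))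
    (hr : ∀ y : Fin m → ℝ, (∀ i, y i = 1 ∨ y i = -1) → ∀ i, r y i * y i ≥ 1) :
    ∀ y : Fin m → ℝ, (∀ i, y i = 1 ∨ y i = -1) →
      y ∈ convexHull ℝ (r '' {y' : Fin m → ℝ | ∀ i, y' i = 1 ∨ y' i = -1}) := by
  intro y hy
  by_contra hmem
  set S : Set (Fin m → ℝ) := r '' {y' : Fin m → ℝ | ∀ i, y' i = 1 ∨ y' i = -1} with hS
  have hSfin : S.Finite := by
    apply Set.Finite.image
    have : {y' : Fin m → ℝ | ∀ i, y' i = 1 ∨ y' i = -1} ⊆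
        Set.pi Set.univ (fun _ => ({1, -1} : Set ℝ)) := by
      intro y' hy' i _
      rcases hy' i with h | h <;> simp [h]
    exact (Set.Finite.pi (fun _ => (Set.finite_singleton _).insert _)).subset this
  have hclosed : IsClosed (convexHull ℝ S) := hSfin.isClosed_convexHull (𝕜 := ℝ)
  obtain ⟨f, u, hfs, hfy⟩ :=
    geometric_hahn_banach_closed_point (convex_convexHull ℝ S) hclosed hmem
  set e : Fin m → (Fin m → ℝ) := fun i j => if i = j then 1 else 0 with he
  have hf : ∀ x : Fin m → ℝ, f x = ∑ i, x i * f (e i) := by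
    intro x
    conv_lhs => rw [pi_eq_sum_univ x]
    rw [map_sum]
    simp [smul_eq_mul, he]
  set c : Fin m → ℝ := fun i => f (e i) with hc
  set y' : Fin m → ℝ := fun i => if 0 ≤ c i then 1 else -1 with hy'
  have hy'sign : ∀ i, y' i = 1 ∨ y' i = -1 := by
    intro i; by_cases h : 0 ≤ c i <;> simp [hy', h]
  have hkey : ∀ i, y i * c i ≤ r y' i * c i := by
    intro i
    have h1 : r y' i * y' i ≥ 1 := hr y' hy'sign i
    have h2 : y i * c i ≤ |c i| := by
      rcases hy i with h | h
      · rw [h, one_mul]; exact le_abs_self _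
      · rw [h, neg_one_mul]; exact neg_le_abs _
    have h3 : |c i| ≤ r y' i * c i := by
      by_cases h : 0 ≤ c i
      · have : y' i = 1 := by simp [hy', h]
        rw [this, mul_one] at h1
        rw [abs_of_nonneg h]
        nlinarith
      · have : y' i = -1 := by simp [hy', h]
        rw [this, mul_neg_one] at h1
        push_neg at h
        rw [abs_of_neg h]
        nlinarith
    linarith
  have hle : f y ≤ f (r y') := by
    rw [hf y, hf (r y')]
    exact Finset.sum_le_sum fun i _ => hkey i
  have hmem' : r y' ∈ convexHull ℝ S :=
    subset_convexHull ℝ S ⟨y', hy'sign, rfl⟩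
  have := hfs (r y') hmem'
  linarith
end

section
/- Let T₁,…,T_d be independent real random variables such that all moments E[T_iⁿ] (n ∈ ℕ) exist and are non-negative for every i. Let λ₁,…,λ_d ∈ [0,1] with Σ_{i=1}^d λ_i = L > 0. Then for every t ≥ 0, E[exp(t·Σ_{i=1}^d λ_i T_i)] ≤ max_{i ∈ [d]} (E[exp(3t·T_i)])^{⌈L⌉}. -/
open MeasureTheory ProbabilityTheory
open scoped ENNReal

lemma aux_exp_sum_le {ι : Type*} (s : Finset ι) (w x : ι → ℝ)
    (h₀ : ∀ i ∈ s, 0 ≤ w i) (h₁ : ∑ i ∈ s, w i ≤ 1) :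
    Real.exp (∑ i ∈ s, w i * x i) ≤ (1 - ∑ i ∈ s, w i) + ∑ i ∈ s, w i * Real.exp (x i) := by
  have h := convexOn_exp.map_add_sum_le (t := s) (w := w) (p := x) (q := 0)
    (v := 1 - ∑ i ∈ s, w i) h₀ (by ring) (fun i _ => Set.mem_univ _)
    (by linarith) (Set.mem_univ _)
  simpa [Real.exp_zero, smul_eq_mul] using h

lemma aux_ofReal_integral_le {α : Type*} [MeasurableSpace α] {μ : Measure α} {f : α → ℝ}
    (hf : Integrable f μ) :
    ENNReal.ofReal (∫ x, f x ∂μ) ≤ ∫⁻ x, ENNReal.ofReal (f x) ∂μ := by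
  have hmax : ∀ a : ℝ, ENNReal.ofReal (max a 0) = ENNReal.ofReal a := by
    intro a
    rcases le_total 0 a with h | h
    · rw [max_eq_left h]
    · rw [max_eq_right h, ENNReal.ofReal_of_nonpos h, ENNReal.ofReal_zero]
  calc ENNReal.ofReal (∫ x, f x ∂μ)
      ≤ ENNReal.ofReal (∫ x, max (f x) 0 ∂μ) := by
        exact ENNReal.ofReal_le_ofReal
          (integral_mono hf hf.pos_part (fun x => le_max_left _ _))
    _ = ∫⁻ x, ENNReal.ofReal (max (f x) 0) ∂μ :=
        ofReal_integral_eq_lintegral_ofReal hf.pos_part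
          (ae_of_all _ fun x => le_max_right _ _)
    _ = ∫⁻ x, ENNReal.ofReal (f x) ∂μ := by simp_rw [hmax]

lemma aux_partition (d : ℕ) (lam : Fin d → ℝ) (h0 : ∀ i, 0 ≤ lam i) (h1 : ∀ i, lam i ≤ 1)
    (L : ℝ) (hL : L = ∑ i, lam i) (hLpos : 0 < L) :
    ∃ g : Fin d → Fin ⌈L⌉₊,
      ∀ k, ∑ i ∈ Finset.univ.filter (fun i => g i = k), lam i ≤ 3 := by
  classical
  set m := ⌈L⌉₊ with hmdef
  have hm0 : 0 < m := Nat.ceil_pos.mpr hLpos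
  set lam' : ℕ → ℝ := fun j => if h : j < d then lam ⟨j, h⟩ else 0 with hlam'def
  have hlam'0 : ∀ j, 0 ≤ lam' j := by
    intro j; simp only [hlam'def]; split
    · exact h0 _
    · exact le_refl 0
  have hlam'1 : ∀ j, lam' j ≤ 1 := by
    intro j; simp only [hlam'def]; split
    · exact h1 _
    · norm_num
  set S : ℕ → ℝ := fun n => ∑ j ∈ Finset.range n, lam' j with hSdef
  have hS0 : ∀ n, 0 ≤ S n := fun n => Finset.sum_nonneg fun j _ => hlam'0 j
  have hSmono : Monotone S := by
    intro a b hab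
    exact Finset.sum_le_sum_of_subset_of_nonneg (Finset.range_subset_range.mpr hab)
      (fun j _ _ => hlam'0 j)
  have hSd : S d = L := by
    show ∑ j ∈ Finset.range d, lam' j = L
    rw [hL, ← Fin.sum_univ_eq_sum_range]
    exact Finset.sum_congr rfl fun i _ => by simp [hlam'def, i.isLt]
  have hSL : ∀ n, S n ≤ L := by
    intro n
    rcases le_total n d with h | h
    · exact (hSmono h).trans_eq hSd
    · have heq : S n = S d + ∑ j ∈ Finset.Ico d n, lam' j := by
        simp only [hSdef]
        rw [Finset.range_eq_Ico, Finset.range_eq_Ico]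
        exact (Finset.sum_Ico_consecutive _ (Nat.zero_le d) h).symm
      have hz : ∑ j ∈ Finset.Ico d n, lam' j = 0 :=
        Finset.sum_eq_zero fun j hj =>
          dif_neg (not_lt.mpr (Finset.mem_Ico.mp hj).1)
      rw [heq, hz, add_zero, hSd]
  refine ⟨fun i => ⟨min ⌊S i.val⌋₊ (m - 1), by omega⟩, ?_⟩
  set g : Fin d → Fin m := fun i => ⟨min ⌊S i.val⌋₊ (m - 1), by omega⟩ with hgdef
  have hlb : ∀ i : Fin d, (((g i).val : ℝ)) ≤ S i.val := by
    intro i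
    have h1' : ((g i).val : ℝ) ≤ (⌊S i.val⌋₊ : ℝ) :=
      Nat.cast_le.mpr (min_le_left _ _)
    exact h1'.trans (Nat.floor_le (hS0 _))
  have hub : ∀ i : Fin d, S i.val ≤ ((g i).val : ℝ) + 1 := by
    intro i
    by_cases h : ⌊S i.val⌋₊ < m - 1
    · have hv : (g i).val = ⌊S i.val⌋₊ := min_eq_left h.le
      rw [hv]
      exact (Nat.lt_floor_add_one (S i.val)).le
    · have hv : (g i).val = m - 1 := min_eq_right (by omega)
      rw [hv]
      have hc : ((m - 1 : ℕ) : ℝ) + 1 = (m : ℝ) := by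
        have h' : m - 1 + 1 = m := Nat.sub_add_cancel hm0
        exact_mod_cast congrArg (Nat.cast : ℕ → ℝ) h'
      rw [hc]
      exact (hSL _).trans (Nat.le_ceil L)
  intro k
  by_cases hne : (Finset.univ.filter (fun i => g i = k)).Nonempty
  · set Ak := Finset.univ.filter (fun i => g i = k) with hAkdef
    set i₀ := Ak.min' hne with hi₀def
    set i₁ := Ak.max' hne with hi₁def
    have hi₀k : g i₀ = k := (Finset.mem_filter.mp (Ak.min'_mem hne)).2
    have hi₁k : g i₁ = k := (Finset.mem_filter.mp (Ak.max'_mem hne)).2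
    have h01 : (i₀ : ℕ) ≤ (i₁ : ℕ) := Finset.min'_le _ _ (Ak.max'_mem hne)
    have step1 : ∑ i ∈ Ak, lam i ≤ ∑ j ∈ Finset.Icc (i₀ : ℕ) (i₁ : ℕ), lam' j := by
      have himg : ∑ j ∈ Ak.image Fin.val, lam' j = ∑ i ∈ Ak, lam i := by
        rw [Finset.sum_image (fun a _ b _ h => Fin.val_injective h)]
        exact Finset.sum_congr rfl fun i _ => by simp [hlam'def, i.isLt]
      rw [← himg]
      apply Finset.sum_le_sum_of_subset_of_nonneg
      · intro j hj
        obtain ⟨i, hi, rfl⟩ := Finset.mem_image.mp hj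
        exact Finset.mem_Icc.mpr ⟨Finset.min'_le _ _ hi, Finset.le_max' _ _ hi⟩
      · exact fun j _ _ => hlam'0 j
    have step2 : ∑ j ∈ Finset.Icc (i₀ : ℕ) (i₁ : ℕ), lam' j
        = S ((i₁ : ℕ) + 1) - S (i₀ : ℕ) := by
      rw [← Finset.Ico_add_one_right_eq_Icc, Finset.sum_Ico_eq_sub _ (by omega)]
    have step3 : S ((i₁ : ℕ) + 1) = S (i₁ : ℕ) + lam' (i₁ : ℕ) :=
      Finset.sum_range_succ _ _
    have hb1 : S (i₁ : ℕ) ≤ ((k : ℕ) : ℝ) + 1 := by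
      have := hub i₁; rwa [hi₁k] at this
    have hb2 : ((k : ℕ) : ℝ) ≤ S (i₀ : ℕ) := by
      have := hlb i₀; rwa [hi₀k] at this
    have hb3 : lam' (i₁ : ℕ) ≤ 1 := hlam'1 _
    calc ∑ i ∈ Ak, lam i ≤ S ((i₁ : ℕ) + 1) - S (i₀ : ℕ) := step1.trans_eq step2
      _ ≤ 3 := by rw [step3]; linarith
  · rw [Finset.not_nonempty_iff_eq_empty.mp hne, Finset.sum_empty]
    norm_num

/-- Let `T₁,…,T_d` be independent real random variables whose
moments `E[Tᵢⁿ]` all exist and are non-negative, and let `λᵢ ∈ [0,1]` with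
`Σ λᵢ = L > 0`.  Then for every `t ≥ 0`,
`E[exp(t Σ λᵢ Tᵢ)] ≤ maxᵢ (E[exp(3t Tᵢ)])^⌈L⌉`
(expectations of exponentials taken in `[0,∞]`). -/
theorem mgf_partition_bound
    (d : ℕ) (hd : 0 < d)
    (Ω : Type*) [MeasurableSpace Ω] (μ : Measure Ω) [IsProbabilityMeasure μ]
    (T : Fin d → Ω → ℝ)
    (hmeas : ∀ i, Measurable (T i))
    (hindep : iIndepFun T μ)
    (hint : ∀ i (n : ℕ), Integrable (fun ω => (T i ω) ^ n) μ)
    (hmom : ∀ i (n : ℕ), 0 ≤ ∫ ω, (T i ω) ^ n ∂μ)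
    (lam : Fin d → ℝ) (hlam : ∀ i, lam i ∈ Set.Icc (0 : ℝ) 1)
    (L : ℝ) (hL : L = ∑ i, lam i) (hLpos : 0 < L)
    (t : ℝ) (ht : 0 ≤ t) :
    ∫⁻ ω, ENNReal.ofReal (Real.exp (t * ∑ i, lam i * T i ω)) ∂μ ≤
      ⨆ i : Fin d,
        (∫⁻ ω, ENNReal.ofReal (Real.exp (3 * t * T i ω)) ∂μ) ^ (⌈L⌉₊) := by
  classical
  set m := ⌈L⌉₊ with hmdef
  obtain ⟨g, hg3⟩ := aux_partition d lam (fun i => (hlam i).1) (fun i => (hlam i).2) L hL hLpos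
  set M : Fin d → ℝ≥0∞ := fun i => ∫⁻ ω, ENNReal.ofReal (Real.exp (3 * t * T i ω)) ∂μ
    with hMdef
  have : Nonempty (Fin d) := ⟨⟨0, hd⟩⟩
  obtain ⟨i₀, hi₀⟩ := Finite.exists_max M
  -- 1 ≤ M i
  have hexpmeas : ∀ i : Fin d, Measurable fun ω => ENNReal.ofReal (Real.exp (3 * t * T i ω)) :=
    fun i => (Real.measurable_exp.comp ((hmeas i).const_mul (3 * t))).ennreal_ofReal
  have hM1 : ∀ i, (1 : ℝ≥0∞) ≤ M i := by
    intro i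
    have hTint : Integrable (T i) μ := by simpa using hint i 1
    have hint1 : Integrable (fun ω => 1 + 3 * t * T i ω) μ :=
      (integrable_const 1).add (hTint.const_mul (3 * t))
    have h0T : (0 : ℝ) ≤ ∫ ω, T i ω ∂μ := by simpa using hmom i 1
    have hInt : (1 : ℝ) ≤ ∫ ω, (1 + 3 * t * T i ω) ∂μ := by
      rw [integral_add (integrable_const 1) (hTint.const_mul _), integral_const,
        probReal_univ, smul_eq_mul, one_mul, integral_const_mul]
      nlinarith
    calc (1 : ℝ≥0∞) = ENNReal.ofReal 1 := ENNReal.ofReal_one.symm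
      _ ≤ ENNReal.ofReal (∫ ω, (1 + 3 * t * T i ω) ∂μ) := ENNReal.ofReal_le_ofReal hInt
      _ ≤ ∫⁻ ω, ENNReal.ofReal (1 + 3 * t * T i ω) ∂μ := aux_ofReal_integral_le hint1
      _ ≤ M i := lintegral_mono fun ω => ENNReal.ofReal_le_ofReal
          (by linarith [Real.add_one_le_exp (3 * t * T i ω)])
  -- integrand over finsets
  set F : Finset (Fin d) → Ω → ℝ≥0∞ :=
    fun s ω => ENNReal.ofReal (Real.exp (t * ∑ i ∈ s, lam i * T i ω)) with hFdef
  have hsum_meas : ∀ s : Finset (Fin d), Measurable fun ω => ∑ i ∈ s, lam i * T i ω :=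
    fun s => Finset.measurable_sum s fun i _ => (hmeas i).const_mul (lam i)
  have hFmeas : ∀ s, Measurable (F s) := fun s =>
    (Real.measurable_exp.comp ((hsum_meas s).const_mul t)).ennreal_ofReal
  -- product rule for disjoint finsets
  have key : ∀ s₁ s₂ : Finset (Fin d), Disjoint s₁ s₂ →
      ∫⁻ ω, F (s₁ ∪ s₂) ω ∂μ = (∫⁻ ω, F s₁ ω ∂μ) * ∫⁻ ω, F s₂ ω ∂μ := by
    intro s₁ s₂ hdisj
    have hφ : ∀ s : Finset (Fin d),
        Measurable fun v : {x // x ∈ s} → ℝ =>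
          ENNReal.ofReal (Real.exp (t * ∑ i : {x // x ∈ s}, lam i.1 * v i)) := by
      intro s
      exact (Real.measurable_exp.comp
        ((Finset.measurable_sum Finset.univ fun i _ =>
          (measurable_pi_apply (X := fun _ => ℝ) i).const_mul (lam i.1)).const_mul t)).ennreal_ofReal
    have hindep2 : IndepFun (F s₁) (F s₂) μ := by
      have h := (hindep.indepFun_finset s₁ s₂ hdisj hmeas).comp (hφ s₁) (hφ s₂)
      have e : ∀ s : Finset (Fin d),
          ((fun v : {x // x ∈ s} → ℝ =>
              ENNReal.ofReal (Real.exp (t * ∑ i : {x // x ∈ s}, lam i.1 * v i)))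
            ∘ (fun ω (i : {x // x ∈ s}) => T i.1 ω)) = F s := by
        intro s
        funext ω
        simp only [Function.comp_apply, hFdef]
        rw [Finset.sum_coe_sort s (fun i => lam i * T i ω)]
      rwa [e s₁, e s₂] at h
    have hpt : ∀ ω, F (s₁ ∪ s₂) ω = F s₁ ω * F s₂ ω := by
      intro ω
      simp only [hFdef]
      rw [Finset.sum_union hdisj, mul_add, Real.exp_add,
        ENNReal.ofReal_mul (Real.exp_nonneg _)]
    calc ∫⁻ ω, F (s₁ ∪ s₂) ω ∂μ = ∫⁻ ω, (F s₁ * F s₂) ω ∂μ :=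
          lintegral_congr fun ω => hpt ω
      _ = _ := lintegral_mul_eq_lintegral_mul_lintegral_of_indepFun
          (hFmeas s₁) (hFmeas s₂) hindep2
  -- groups
  set A : Fin m → Finset (Fin d) := fun k => Finset.univ.filter (fun i => g i = k) with hAdef
  have hAdisj : ∀ k k' : Fin m, k ≠ k' → Disjoint (A k) (A k') := by
    intro k k' hkk'
    rw [Finset.disjoint_left]
    intro i hi hi'
    rw [hAdef, Finset.mem_filter] at hi hi'
    exact hkk' (hi.2 ▸ hi'.2 ▸ rfl)
  have hprod : ∀ s : Finset (Fin m),
      ∫⁻ ω, F (s.biUnion A) ω ∂μ = ∏ k ∈ s, ∫⁻ ω, F (A k) ω ∂μ := by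
    intro s
    induction s using Finset.induction_on with
    | empty => simp [hFdef]
    | @insert k s hk ih =>
      have hdisj : Disjoint (A k) (s.biUnion A) := by
        rw [Finset.disjoint_biUnion_right]
        intro k' hk'
        exact hAdisj k k' (fun h => hk (h ▸ hk'))
      rw [Finset.biUnion_insert, key _ _ hdisj, ih, Finset.prod_insert hk]
  have huniv : (Finset.univ : Finset (Fin m)).biUnion A = (Finset.univ : Finset (Fin d)) := by
    ext i
    simp only [Finset.mem_biUnion, Finset.mem_univ, true_and, hAdef, Finset.mem_filter,
      iff_true]
    exact ⟨g i, rfl⟩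
  -- per-group bound
  have hgroup : ∀ k, ∫⁻ ω, F (A k) ω ∂μ ≤ M i₀ := by
    intro k
    set W : ℝ := ∑ i ∈ A k, lam i / 3 with hWdef
    have hW0 : 0 ≤ W := Finset.sum_nonneg fun i _ => by linarith [(hlam i).1]
    have hW1 : W ≤ 1 := by
      have h3 := hg3 k
      rw [hWdef, ← Finset.sum_div]
      rw [hAdef]
      linarith
    have hpt : ∀ ω, F (A k) ω ≤ ENNReal.ofReal (1 - W) +
        ∑ i ∈ A k, ENNReal.ofReal (lam i / 3) *
          ENNReal.ofReal (Real.exp (3 * t * T i ω)) := by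
      intro ω
      have hexp : Real.exp (t * ∑ i ∈ A k, lam i * T i ω) ≤
          (1 - W) + ∑ i ∈ A k, lam i / 3 * Real.exp (3 * t * T i ω) := by
        have harg : t * ∑ i ∈ A k, lam i * T i ω
            = ∑ i ∈ A k, lam i / 3 * (3 * t * T i ω) := by
          rw [Finset.mul_sum]
          exact Finset.sum_congr rfl fun i _ => by ring
        rw [harg]
        exact aux_exp_sum_le (A k) (fun i => lam i / 3) (fun i => 3 * t * T i ω)
          (fun i _ => by linarith [(hlam i).1]) hW1
      calc F (A k) ω
          ≤ ENNReal.ofReal ((1 - W) + ∑ i ∈ A k, lam i / 3 * Real.exp (3 * t * T i ω)) :=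
            ENNReal.ofReal_le_ofReal hexp
        _ ≤ ENNReal.ofReal (1 - W) +
            ENNReal.ofReal (∑ i ∈ A k, lam i / 3 * Real.exp (3 * t * T i ω)) :=
            ENNReal.ofReal_add_le
        _ = _ := by
            rw [ENNReal.ofReal_sum_of_nonneg (fun i _ =>
              mul_nonneg (by linarith [(hlam i).1]) (Real.exp_nonneg _))]
            congr 1
            exact Finset.sum_congr rfl fun i _ =>
              ENNReal.ofReal_mul (by linarith [(hlam i).1])
    have hofW : ∑ i ∈ A k, ENNReal.ofReal (lam i / 3) = ENNReal.ofReal W := by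
      rw [hWdef, ENNReal.ofReal_sum_of_nonneg (fun i _ => by linarith [(hlam i).1])]
    calc ∫⁻ ω, F (A k) ω ∂μ
        ≤ ∫⁻ ω, (ENNReal.ofReal (1 - W) +
            ∑ i ∈ A k, ENNReal.ofReal (lam i / 3) *
              ENNReal.ofReal (Real.exp (3 * t * T i ω))) ∂μ := lintegral_mono hpt
      _ = ENNReal.ofReal (1 - W) + ∑ i ∈ A k, ENNReal.ofReal (lam i / 3) * M i := by
          rw [lintegral_add_left measurable_const, lintegral_const, measure_univ, mul_one,
            lintegral_finset_sum _ (fun i _ => (hexpmeas i).const_mul _)]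
          congr 1
          exact Finset.sum_congr rfl fun i _ => lintegral_const_mul _ (hexpmeas i)
      _ ≤ ENNReal.ofReal (1 - W) * M i₀ +
            ∑ i ∈ A k, ENNReal.ofReal (lam i / 3) * M i₀ := by
          apply add_le_add
          · conv_lhs => rw [← mul_one (ENNReal.ofReal (1 - W))]
            exact mul_le_mul_right (hM1 i₀) _
          · exact Finset.sum_le_sum fun i _ => mul_le_mul_right (hi₀ i) _
      _ = (ENNReal.ofReal (1 - W) + ENNReal.ofReal W) * M i₀ := by
          rw [add_mul, ← Finset.sum_mul, hofW]
      _ = M i₀ := by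
          rw [← ENNReal.ofReal_add (by linarith) hW0]
          have h1 : 1 - W + W = 1 := by ring
          rw [h1, ENNReal.ofReal_one, one_mul]
  -- conclude
  calc ∫⁻ ω, ENNReal.ofReal (Real.exp (t * ∑ i, lam i * T i ω)) ∂μ
      = ∫⁻ ω, F Finset.univ ω ∂μ := rfl
    _ = ∏ k : Fin m, ∫⁻ ω, F (A k) ω ∂μ := by rw [← huniv, hprod]
    _ ≤ ∏ _k : Fin m, M i₀ := Finset.prod_le_prod' fun k _ => hgroup k
    _ = M i₀ ^ m := by rw [Finset.prod_const, Finset.card_univ, Fintype.card_fin]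
    _ ≤ ⨆ i : Fin d, M i ^ m := le_iSup (fun i => M i ^ m) i₀
end

section
/- Let m ≤ d be positive integers, let Y be a d×m random matrix whose entries Y_{ij} are independent real random variables, each sub-Gaussian with moment B, and let Σ be a d×d diagonal positive semidefinite matrix with Σ ≤ I_d. Then for every t ≥ 0 and every ε ∈ (0,1), P[‖√Σ · Y‖ ≥ t] ≤ N_m(ε)·exp(trace(Σ)/2 − t²(1−ε)²/(4B²)), where ‖·‖ is the operator (spectral) norm and N_m(ε) is the minimal cardinality of an ε-net of the unit sphere of ℝ^m. -/
open MeasureTheory ProbabilityTheory Matrix Real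
open scoped ENNReal



/-- Factorization of the lintegral of a product of functions depending on
pairwise disjoint sets of independent coordinates. -/
theorem lintegral_prod_mask {d m : ℕ} {Ω : Type*} [MeasurableSpace Ω] {μ : Measure Ω}
    [IsProbabilityMeasure μ]
    (Y : Fin d × Fin m → Ω → ℝ) (hYmeas : ∀ p, Measurable (Y p))
    (hindep : iIndepFun Y μ)
    {κ : Type*} [DecidableEq κ]
    (ρ : κ → Finset (Fin d × Fin m)) (hρ : ∀ k l, k ≠ l → Disjoint (ρ k) (ρ l))
    (g : κ → ((Fin d × Fin m) → ℝ) → ℝ≥0∞) (hg : ∀ k, Measurable (g k))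
    (s : Finset κ) :
    ∫⁻ ω, ∏ k ∈ s, g k (fun p => if p ∈ ρ k then Y p ω else 0) ∂μ
      = ∏ k ∈ s, ∫⁻ ω, g k (fun p => if p ∈ ρ k then Y p ω else 0) ∂μ := by
  classical
  set G : κ → Ω → ℝ≥0∞ := fun k ω => g k (fun p => if p ∈ ρ k then Y p ω else 0) with hGdef
  have hGmeas : ∀ k, Measurable (G k) := by
    intro k
    refine (hg k).comp (measurable_pi_lambda _ fun p => ?_)
    by_cases h : p ∈ ρ k
    · simpa [h] using hYmeas p
    · simp [h]
  induction s using Finset.induction_on with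
  | empty => simp
  | insert _ _ hk₀ ih =>
    rename_i k₀ s
    simp only [Finset.prod_insert hk₀]
    have hdisj : Disjoint (ρ k₀) (s.biUnion ρ) := by
      rw [Finset.disjoint_biUnion_right]
      intro k hk
      exact hρ k₀ k (by rintro rfl; exact hk₀ hk)
    have hind := hindep.indepFun_finset (ρ k₀) (s.biUnion ρ) hdisj hYmeas
    set φ : ({p // p ∈ ρ k₀} → ℝ) → ℝ≥0∞ :=
      fun v => g k₀ (fun p => if h : p ∈ ρ k₀ then v ⟨p, h⟩ else 0) with hφdef
    set ψ : ({p // p ∈ s.biUnion ρ} → ℝ) → ℝ≥0∞ :=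
      fun v => ∏ k ∈ s, g k
        (fun p => if h : p ∈ s.biUnion ρ then (if p ∈ ρ k then v ⟨p, h⟩ else 0) else 0)
      with hψdef
    have hφmeas : Measurable φ := by
      refine (hg k₀).comp (measurable_pi_lambda _ fun p => ?_)
      by_cases h : p ∈ ρ k₀
      · simpa [h] using measurable_pi_apply (⟨p, h⟩ : {p // p ∈ ρ k₀})
      · simp [h]
    have hψmeas : Measurable ψ := by
      refine Finset.measurable_prod s fun k _ => ?_
      refine (hg k).comp (measurable_pi_lambda _ fun p => ?_)
      by_cases h : p ∈ s.biUnion ρ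
      · by_cases h2 : p ∈ ρ k
        · simpa [h, h2] using
            measurable_pi_apply (⟨p, h⟩ : {p // p ∈ s.biUnion ρ})
        · simp [h, h2]
      · simp [h]
    have hcomp := hind.comp hφmeas hψmeas
    have hl : (φ ∘ fun ω (p : ρ k₀) => Y p ω) = G k₀ := by
      funext ω
      simp only [Function.comp_apply, hφdef, hGdef]
      congr 1
    have hr : (ψ ∘ fun ω (p : s.biUnion ρ) => Y p ω) =
        fun ω => ∏ k ∈ s, G k ω := by
      funext ω
      simp only [Function.comp_apply, hψdef, hGdef]
      refine Finset.prod_congr rfl fun k hk => ?_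
      congr 1
      funext p
      by_cases h2 : p ∈ ρ k
      · have h : p ∈ s.biUnion ρ := Finset.mem_biUnion.2 ⟨k, hk, h2⟩
        simp [h, h2]
      · by_cases h : p ∈ s.biUnion ρ <;> simp [h, h2]
    rw [hl, hr] at hcomp
    have hmul := lintegral_mul_eq_lintegral_mul_lintegral_of_indepFun
      (hGmeas k₀) (Finset.measurable_prod s fun k _ => hGmeas k) hcomp
    calc ∫⁻ ω, G k₀ ω * ∏ k ∈ s, G k ω ∂μ
        = (∫⁻ ω, G k₀ ω ∂μ) * ∫⁻ ω, ∏ k ∈ s, G k ω ∂μ := hmul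
      _ = (∫⁻ ω, G k₀ ω ∂μ) * ∏ k ∈ s, ∫⁻ ω, G k ω ∂μ := by rw [ih]



theorem measure_le_chernoff {Ω : Type*} [MeasurableSpace Ω] {μ : Measure Ω}
    (W : Ω → ℝ) (hW : Measurable W) (θ a : ℝ) (hθ : 0 ≤ θ) :
    μ {ω | a ≤ W ω} ≤
      ENNReal.ofReal (Real.exp (-(θ * a))) * ∫⁻ ω, ENNReal.ofReal (Real.exp (θ * W ω)) ∂μ := by
  have hset : MeasurableSet {ω | a ≤ W ω} := measurableSet_le measurable_const hW
  have hle : ∀ ω, {ω | a ≤ W ω}.indicator (fun _ => (1 : ℝ≥0∞)) ω ≤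
      ENNReal.ofReal (Real.exp (θ * W ω)) * ENNReal.ofReal (Real.exp (-(θ * a))) := by
    intro ω
    by_cases hω : ω ∈ {ω | a ≤ W ω}
    · rw [Set.indicator_of_mem hω]
      rw [← ENNReal.ofReal_mul (Real.exp_pos _).le, ← Real.exp_add]
      calc (1 : ℝ≥0∞) = ENNReal.ofReal (Real.exp 0) := by simp
        _ ≤ _ := by
            apply ENNReal.ofReal_le_ofReal
            apply Real.exp_le_exp.2
            have : a ≤ W ω := hω
            nlinarith
    · rw [Set.indicator_of_notMem hω]; exact zero_le
  calc μ {ω | a ≤ W ω} = ∫⁻ ω, {ω | a ≤ W ω}.indicator (fun _ => (1 : ℝ≥0∞)) ω ∂μ := by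
        rw [lintegral_indicator hset]; simp
    _ ≤ ∫⁻ ω, ENNReal.ofReal (Real.exp (θ * W ω)) * ENNReal.ofReal (Real.exp (-(θ * a))) ∂μ :=
        lintegral_mono hle
    _ = (∫⁻ ω, ENNReal.ofReal (Real.exp (θ * W ω)) ∂μ) * ENNReal.ofReal (Real.exp (-(θ * a))) :=
        lintegral_mul_const' _ _ (by simp)
    _ = _ := mul_comm _ _

theorem lintegral_exp_mul_sq_le {Ω : Type*} [MeasurableSpace Ω] {μ : Measure Ω}
    [IsProbabilityMeasure μ] (B : ℝ) (hB : 0 < B) (X : Ω → ℝ) (hX : Measurable X)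
    (hsub : ∀ s : ℝ, ∫⁻ ω, ENNReal.ofReal (Real.exp (s * X ω)) ∂μ ≤
      ENNReal.ofReal (Real.exp (B ^ 2 * s ^ 2 / 2)))
    (l : ℝ) (hl0 : 0 ≤ l) (hl1 : l ≤ 1) :
    ∫⁻ ω, ENNReal.ofReal (Real.exp (l / (4 * B ^ 2) * X ω ^ 2)) ∂μ ≤
      ENNReal.ofReal (Real.exp (l / 2)) := by
  rcases eq_or_lt_of_le hl0 with h0 | h0
  · simp only [← h0, zero_div, zero_mul, Real.exp_zero, ENNReal.ofReal_one, lintegral_one,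
      measure_univ, le_refl]
  set a : ℝ := l / (4 * B ^ 2) with ha_def
  set b : ℝ := B ^ 2 / l with hb_def
  have hB2 : (0:ℝ) < B ^ 2 := by positivity
  have ha : 0 < a := by positivity
  have hb : 0 < b := by positivity
  have hq : 0 < b - B ^ 2 / 2 := by
    rw [hb_def, sub_pos]
    calc B ^ 2 / 2 < B ^ 2 / 1 := by
          apply div_lt_div_of_pos_left hB2 <;> norm_num
      _ ≤ B ^ 2 / l := by
          apply div_le_div_of_nonneg_left hB2.le h0 hl1
  -- Gaussian lintegral
  have gauss : ∀ c : ℝ, 0 < c →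
      ∫⁻ s : ℝ, ENNReal.ofReal (Real.exp (-c * s ^ 2)) = ENNReal.ofReal (Real.sqrt (π / c)) := by
    intro c hc
    rw [← ofReal_integral_eq_lintegral_ofReal (integrable_exp_neg_mul_sq hc)
      (Filter.Eventually.of_forall fun s => (Real.exp_pos _).le), integral_gaussian]
  -- pointwise Gaussian-trick identity
  have point : ∀ x : ℝ,
      ∫⁻ s : ℝ, ENNReal.ofReal (Real.exp (s * x - b * s ^ 2)) =
        ENNReal.ofReal (Real.sqrt (π / b)) * ENNReal.ofReal (Real.exp (a * x ^ 2)) := by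
    intro x
    have key : ∀ s : ℝ, s * x - b * s ^ 2 = -b * (s + -(x / (2 * b))) ^ 2 + a * x ^ 2 := by
      intro s
      rw [ha_def, hb_def]
      field_simp
      ring
    calc ∫⁻ s : ℝ, ENNReal.ofReal (Real.exp (s * x - b * s ^ 2))
        = ∫⁻ s : ℝ, ENNReal.ofReal (Real.exp (-b * (s + -(x / (2 * b))) ^ 2)) *
            ENNReal.ofReal (Real.exp (a * x ^ 2)) := by
          refine lintegral_congr fun s => ?_
          rw [← ENNReal.ofReal_mul (Real.exp_pos _).le, ← Real.exp_add, key s]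
      _ = (∫⁻ s : ℝ, ENNReal.ofReal (Real.exp (-b * (s + -(x / (2 * b))) ^ 2))) *
            ENNReal.ofReal (Real.exp (a * x ^ 2)) := lintegral_mul_const' _ _ (by simp)
      _ = (∫⁻ s : ℝ, ENNReal.ofReal (Real.exp (-b * s ^ 2))) *
            ENNReal.ofReal (Real.exp (a * x ^ 2)) := by
          congr 1
          exact lintegral_add_right_eq_self
            (fun u => ENNReal.ofReal (Real.exp (-b * u ^ 2))) (-(x / (2 * b)))
      _ = _ := by rw [gauss b hb]
  -- Tonelli
  have humeas : Measurable (Function.uncurry fun (ω : Ω) (s : ℝ) =>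
      ENNReal.ofReal (Real.exp (s * X ω - b * s ^ 2))) := by
    apply ENNReal.measurable_ofReal.comp
    apply Real.measurable_exp.comp
    exact (measurable_snd.mul (hX.comp measurable_fst)).sub
      ((measurable_const.mul (measurable_snd.pow measurable_const)))
  have swap : ∫⁻ ω, (∫⁻ s : ℝ, ENNReal.ofReal (Real.exp (s * X ω - b * s ^ 2))) ∂μ =
      ∫⁻ s : ℝ, ∫⁻ ω, ENNReal.ofReal (Real.exp (s * X ω - b * s ^ 2)) ∂μ :=
    lintegral_lintegral_swap humeas.aemeasurable
  have lhs_eq : ∫⁻ ω, (∫⁻ s : ℝ, ENNReal.ofReal (Real.exp (s * X ω - b * s ^ 2))) ∂μ =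
      ENNReal.ofReal (Real.sqrt (π / b)) *
        ∫⁻ ω, ENNReal.ofReal (Real.exp (a * X ω ^ 2)) ∂μ := by
    calc ∫⁻ ω, (∫⁻ s : ℝ, ENNReal.ofReal (Real.exp (s * X ω - b * s ^ 2))) ∂μ
        = ∫⁻ ω, ENNReal.ofReal (Real.sqrt (π / b)) *
            ENNReal.ofReal (Real.exp (a * X ω ^ 2)) ∂μ :=
          lintegral_congr fun ω => point (X ω)
      _ = _ := lintegral_const_mul' _ _ (by simp)
  have rhs_le : ∫⁻ s : ℝ, ∫⁻ ω, ENNReal.ofReal (Real.exp (s * X ω - b * s ^ 2)) ∂μ ≤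
      ENNReal.ofReal (Real.sqrt (π / (b - B ^ 2 / 2))) := by
    have inner : ∀ s : ℝ, ∫⁻ ω, ENNReal.ofReal (Real.exp (s * X ω - b * s ^ 2)) ∂μ ≤
        ENNReal.ofReal (Real.exp (-(b - B ^ 2 / 2) * s ^ 2)) := by
      intro s
      calc ∫⁻ ω, ENNReal.ofReal (Real.exp (s * X ω - b * s ^ 2)) ∂μ
          = (∫⁻ ω, ENNReal.ofReal (Real.exp (s * X ω)) ∂μ) *
              ENNReal.ofReal (Real.exp (-(b * s ^ 2))) := by
            rw [← lintegral_mul_const' _ _ (by simp : ENNReal.ofReal (Real.exp (-(b * s^2))) ≠ ⊤)]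
            refine lintegral_congr fun ω => ?_
            rw [← ENNReal.ofReal_mul (Real.exp_pos _).le, ← Real.exp_add]
            ring_nf
        _ ≤ ENNReal.ofReal (Real.exp (B ^ 2 * s ^ 2 / 2)) *
              ENNReal.ofReal (Real.exp (-(b * s ^ 2))) :=
            mul_le_mul_left (hsub s) _
        _ = ENNReal.ofReal (Real.exp (-(b - B ^ 2 / 2) * s ^ 2)) := by
            rw [← ENNReal.ofReal_mul (Real.exp_pos _).le, ← Real.exp_add]
            congr 1
            ring
    calc ∫⁻ s : ℝ, ∫⁻ ω, ENNReal.ofReal (Real.exp (s * X ω - b * s ^ 2)) ∂μ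
        ≤ ∫⁻ s : ℝ, ENNReal.ofReal (Real.exp (-(b - B ^ 2 / 2) * s ^ 2)) :=
          lintegral_mono inner
      _ = ENNReal.ofReal (Real.sqrt (π / (b - B ^ 2 / 2))) := gauss _ hq
  have main : ENNReal.ofReal (Real.sqrt (π / b)) *
      (∫⁻ ω, ENNReal.ofReal (Real.exp (a * X ω ^ 2)) ∂μ) ≤
      ENNReal.ofReal (Real.sqrt (π / (b - B ^ 2 / 2))) := by
    rw [← lhs_eq]; rw [swap]; exact rhs_le
  have hsqrtb : 0 < Real.sqrt (π / b) := Real.sqrt_pos.2 (by positivity)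
  have hdiv : ∫⁻ ω, ENNReal.ofReal (Real.exp (a * X ω ^ 2)) ∂μ ≤
      ENNReal.ofReal (Real.sqrt (π / (b - B ^ 2 / 2)) / Real.sqrt (π / b)) := by
    rw [ENNReal.ofReal_div_of_pos hsqrtb]
    rw [ENNReal.le_div_iff_mul_le (Or.inl (by simp [hsqrtb])) (Or.inl (by simp))]
    rw [mul_comm]
    exact main
  refine hdiv.trans (ENNReal.ofReal_le_ofReal ?_)
  -- real inequality: √(π/q)/√(π/b) ≤ exp (l/2)
  have hexp : π / (b - B ^ 2 / 2) / (π / b) ≤ Real.exp l := by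
    have h2 : (0:ℝ) < 2 - l := by linarith
    have key : 2 ≤ Real.exp l * (2 - l) := by
      calc (2:ℝ) ≤ (l + 1) * (2 - l) := by nlinarith
        _ ≤ Real.exp l * (2 - l) :=
          mul_le_mul_of_nonneg_right (Real.add_one_le_exp l) h2.le
    have hq2 : (0:ℝ) < b * 2 - B ^ 2 := by nlinarith
    have heq : π / (b - B ^ 2 / 2) / (π / b) = b / (b - B ^ 2 / 2) := by
      field_simp
    have h3 : b - B ^ 2 / 2 = B ^ 2 * (2 - l) / (2 * l) := by
      rw [hb_def]; field_simp
    rw [heq, div_le_iff₀ hq, h3, hb_def]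
    rw [mul_div_assoc']
    rw [div_le_div_iff₀ h0 (by positivity)]
    nlinarith [mul_le_mul_of_nonneg_left key (mul_nonneg hB2.le hl0)]
  calc Real.sqrt (π / (b - B ^ 2 / 2)) / Real.sqrt (π / b)
      = Real.sqrt (π / (b - B ^ 2 / 2) / (π / b)) := (Real.sqrt_div (by positivity) _).symm
    _ ≤ Real.sqrt (Real.exp l) := Real.sqrt_le_sqrt hexp
    _ = Real.exp (l / 2) := by
        rw [show Real.exp l = Real.exp (l / 2) ^ 2 by
          rw [pow_two, ← Real.exp_add, add_halves], Real.sqrt_sq (Real.exp_pos _).le]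


noncomputable def sphereCoveringNumber (m : ℕ) (ε : ℝ) : ℕ :=
  sInf {n : ℕ | ∃ C : Finset (EuclideanSpace ℝ (Fin m)), C.card = n ∧
    (∀ c ∈ C, ‖c‖ = 1) ∧
    ∀ x : EuclideanSpace ℝ (Fin m), ‖x‖ = 1 → ∃ c ∈ C, dist x c ≤ ε}

/-- If `Y` is a `d × m` random matrix (`m ≤ d`) with independent
entries, each sub-Gaussian with moment `B`, and `Σ = diag(λ)` is diagonal PSD with
`Σ ≤ I`, then for all `t ≥ 0` and `ε ∈ (0,1)`,
`P[‖√Σ Y‖ ≥ t] ≤ N_m(ε) exp(trace(Σ)/2 − t²(1−ε)²/(4B²))`,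
where `‖·‖` is the operator norm. -/
theorem opNorm_tail_bound_subgaussian
    (d m : ℕ) (hm : 0 < m) (hmd : m ≤ d) (B : ℝ) (hB : 0 < B)
    (Ω : Type*) [MeasurableSpace Ω] (μ : Measure Ω) [IsProbabilityMeasure μ]
    (Y : Fin d → Fin m → Ω → ℝ)
    (hmeas : ∀ i j, Measurable (Y i j))
    (hindep : iIndepFun
      (fun (p : Fin d × Fin m) ω => Y p.1 p.2 ω) μ)
    (hsub : ∀ i j (s : ℝ), ∫⁻ ω, ENNReal.ofReal (Real.exp (s * Y i j ω)) ∂μ ≤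
      ENNReal.ofReal (Real.exp (B ^ 2 * s ^ 2 / 2)))
    (lam : Fin d → ℝ) (hlam : ∀ i, lam i ∈ Set.Icc (0 : ℝ) 1)
    (t ε : ℝ) (ht : 0 ≤ t) (hε : ε ∈ Set.Ioo (0 : ℝ) 1) :
    μ {ω : Ω | t ≤
        ‖LinearMap.toContinuousLinearMap (Matrix.toEuclideanLin
          (Matrix.of fun (i : Fin d) (j : Fin m) => Real.sqrt (lam i) * Y i j ω))‖} ≤
      ENNReal.ofReal ((sphereCoveringNumber m ε : ℝ) *
        Real.exp ((∑ i, lam i) / 2 - t ^ 2 * (1 - ε) ^ 2 / (4 * B ^ 2))) := by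
  classical
  obtain ⟨hε0, hε1⟩ := hε
  set A : Ω → (EuclideanSpace ℝ (Fin m) →L[ℝ] EuclideanSpace ℝ (Fin d)) := fun ω =>
    LinearMap.toContinuousLinearMap (Matrix.toEuclideanLin
      (Matrix.of fun (i : Fin d) (j : Fin m) => Real.sqrt (lam i) * Y i j ω)) with hAdef
  have hZmeas : ∀ (c : EuclideanSpace ℝ (Fin m)) (i : Fin d),
      Measurable (fun ω => ∑ j, c j * Y i j ω) := fun c i =>
    Finset.measurable_sum _ fun j _ => (hmeas i j).const_mul (c j)
  have hWmeas : ∀ (c : EuclideanSpace ℝ (Fin m)),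
      Measurable (fun ω => ∑ i, lam i * (∑ j, c j * Y i j ω) ^ 2) := fun c =>
    Finset.measurable_sum _ fun i _ => (((hZmeas c i).pow_const 2).const_mul (lam i))
  -- pointwise application and norm of A
  have happly : ∀ (ω : Ω) (c : EuclideanSpace ℝ (Fin m)) (i : Fin d),
      A ω c i = Real.sqrt (lam i) * ∑ j, c j * Y i j ω := by
    intro ω c i
    simp only [hAdef, LinearMap.coe_toContinuousLinearMap', Matrix.toEuclideanLin_apply,
      PiLp.toLp_apply, Matrix.mulVec, dotProduct,
      Matrix.of_apply]
    rw [Finset.mul_sum]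
    exact Finset.sum_congr rfl fun j _ => by ring
  have hnormsq : ∀ (ω : Ω) (c : EuclideanSpace ℝ (Fin m)),
      ‖A ω c‖ ^ 2 = ∑ i, lam i * (∑ j, c j * Y i j ω) ^ 2 := by
    intro ω c
    rw [EuclideanSpace.norm_eq, Real.sq_sqrt (by positivity)]
    refine Finset.sum_congr rfl fun i _ => ?_
    rw [happly ω c i, Real.norm_eq_abs, sq_abs, mul_pow, Real.sq_sqrt (hlam i).1]
  -- the optimal net
  have hex : {n : ℕ | ∃ C : Finset (EuclideanSpace ℝ (Fin m)), C.card = n ∧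
      (∀ c ∈ C, ‖c‖ = 1) ∧
      ∀ x : EuclideanSpace ℝ (Fin m), ‖x‖ = 1 → ∃ c ∈ C, dist x c ≤ ε}.Nonempty := by
    obtain ⟨s0, hsub0, hfin, hcov⟩ :=
      (isCompact_sphere (0 : EuclideanSpace ℝ (Fin m)) 1).finite_cover_balls hε0
    refine ⟨hfin.toFinset.card, hfin.toFinset, rfl, ?_, ?_⟩
    · intro c hc
      have := hsub0 (hfin.mem_toFinset.1 hc)
      rwa [mem_sphere_zero_iff_norm] at this
    · intro x hx
      have hxs : x ∈ Metric.sphere (0 : EuclideanSpace ℝ (Fin m)) 1 := by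
        rwa [mem_sphere_zero_iff_norm]
      obtain ⟨c, hc, hball⟩ := Set.mem_iUnion₂.1 (hcov hxs)
      exact ⟨c, hfin.mem_toFinset.2 hc, (Metric.mem_ball.1 hball).le⟩
  obtain ⟨C, hCcard, hCnorm, hCnet⟩ := Nat.sInf_mem hex
  have hCne : C.Nonempty := by
    have hx0 : ‖(EuclideanSpace.single (⟨0, hm⟩ : Fin m) (1:ℝ))‖ = 1 := by
      rw [EuclideanSpace.norm_single]; norm_num
    obtain ⟨c₀, hc₀, _⟩ := hCnet _ hx0
    exact ⟨c₀, hc₀⟩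
  -- event inclusion
  have hincl : {ω : Ω | t ≤ ‖A ω‖} ⊆
      ⋃ c ∈ C, {ω : Ω | t ^ 2 * (1 - ε) ^ 2 ≤ ∑ i, lam i * (∑ j, c j * Y i j ω) ^ 2} := by
    intro ω hω
    have hω' : t ≤ ‖A ω‖ := hω
    obtain ⟨cs, hcs, hmax⟩ := C.exists_max_image (fun c => ‖A ω c‖) hCne
    have hr0 : (0:ℝ) ≤ ‖A ω cs‖ := norm_nonneg _
    have hopb : ‖A ω‖ ≤ ε * ‖A ω‖ + ‖A ω cs‖ := by
      refine ContinuousLinearMap.opNorm_le_bound _ (by positivity) fun x => ?_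
      rcases eq_or_ne x 0 with rfl | hx
      · simp
      · have hxn : ‖x‖ ≠ 0 := norm_ne_zero_iff.2 hx
        have hun : ‖(‖x‖⁻¹ • x)‖ = 1 := norm_smul_inv_norm hx
        obtain ⟨c, hcC, hdist⟩ := hCnet _ hun
        have h1 : ‖A ω (‖x‖⁻¹ • x)‖ ≤ ε * ‖A ω‖ + ‖A ω cs‖ := by
          calc ‖A ω (‖x‖⁻¹ • x)‖ = ‖A ω ((‖x‖⁻¹ • x) - c) + A ω c‖ := by
                rw [map_sub, sub_add_cancel]
            _ ≤ ‖A ω ((‖x‖⁻¹ • x) - c)‖ + ‖A ω c‖ := norm_add_le _ _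
            _ ≤ ‖A ω‖ * ‖(‖x‖⁻¹ • x) - c‖ + ‖A ω cs‖ :=
                add_le_add ((A ω).le_opNorm _) (hmax c hcC)
            _ ≤ ‖A ω‖ * ε + ‖A ω cs‖ := by
                have hd : ‖(‖x‖⁻¹ • x) - c‖ ≤ ε := by rw [← dist_eq_norm]; exact hdist
                gcongr
            _ = ε * ‖A ω‖ + ‖A ω cs‖ := by ring
        have h2 : ‖A ω (‖x‖⁻¹ • x)‖ = ‖x‖⁻¹ * ‖A ω x‖ := by
          rw [ContinuousLinearMap.map_smul, norm_smul, norm_inv, norm_norm]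
        calc ‖A ω x‖ = ‖x‖ * ‖A ω (‖x‖⁻¹ • x)‖ := by
              rw [h2]; field_simp
          _ ≤ ‖x‖ * (ε * ‖A ω‖ + ‖A ω cs‖) :=
              mul_le_mul_of_nonneg_left h1 (norm_nonneg x)
          _ = (ε * ‖A ω‖ + ‖A ω cs‖) * ‖x‖ := by ring
    have hfinal : t * (1 - ε) ≤ ‖A ω cs‖ := by
      have h3 := mul_le_mul_of_nonneg_left hω' (by linarith : (0:ℝ) ≤ 1 - ε)
      nlinarith [norm_nonneg (A ω)]
    have h4 : (t * (1 - ε)) ^ 2 ≤ ‖A ω cs‖ ^ 2 :=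
      pow_le_pow_left₀ (mul_nonneg ht (by linarith)) hfinal 2
    rw [hnormsq] at h4
    refine Set.mem_iUnion₂.2 ⟨cs, hcs, ?_⟩
    have heq : t ^ 2 * (1 - ε) ^ 2 = (t * (1 - ε)) ^ 2 := by ring
    rw [Set.mem_setOf_eq, heq]
    exact h4
  -- per-vector tail bound
  have key : ∀ c ∈ C,
      μ {ω : Ω | t ^ 2 * (1 - ε) ^ 2 ≤ ∑ i, lam i * (∑ j, c j * Y i j ω) ^ 2} ≤
      ENNReal.ofReal (Real.exp ((∑ i, lam i) / 2 - t ^ 2 * (1 - ε) ^ 2 / (4 * B ^ 2))) := by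
    intro c hc
    have hc2 : ∑ j, (c j) ^ 2 = 1 := by
      have h1 := hCnorm c hc
      rw [EuclideanSpace.norm_eq] at h1
      have h2 : ∑ j, ‖c j‖ ^ 2 = 1 := Real.sqrt_eq_one.1 h1
      simpa [Real.norm_eq_abs, sq_abs] using h2
    -- each row combination is sub-Gaussian with moment B
    have hZsub : ∀ (i : Fin d) (s : ℝ),
        ∫⁻ ω, ENNReal.ofReal (Real.exp (s * ∑ j, c j * Y i j ω)) ∂μ ≤
          ENNReal.ofReal (Real.exp (B ^ 2 * s ^ 2 / 2)) := by
      intro i s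
      have hPM := lintegral_prod_mask (fun p ω => Y p.1 p.2 ω) (fun p => hmeas p.1 p.2) hindep
        (ρ := fun j : Fin m => {(i, j)})
        (fun j l hjl => Finset.disjoint_singleton.2 (by simp [hjl]))
        (g := fun j v => ENNReal.ofReal (Real.exp (s * c j * v (i, j))))
        (fun j => ENNReal.measurable_ofReal.comp (Real.measurable_exp.comp
          ((measurable_pi_apply (i, j)).const_mul _)))
        Finset.univ
      simp only [Finset.mem_singleton, if_pos rfl, if_true] at hPM
      calc ∫⁻ ω, ENNReal.ofReal (Real.exp (s * ∑ j, c j * Y i j ω)) ∂μ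
          = ∫⁻ ω, ∏ j, ENNReal.ofReal (Real.exp (s * c j * Y i j ω)) ∂μ := by
            refine lintegral_congr fun ω => ?_
            rw [Finset.mul_sum, Real.exp_sum,
              ENNReal.ofReal_prod_of_nonneg (fun j _ => (Real.exp_pos _).le)]
            exact Finset.prod_congr rfl fun j _ => by rw [← mul_assoc]
        _ = ∏ j, ∫⁻ ω, ENNReal.ofReal (Real.exp (s * c j * Y i j ω)) ∂μ := hPM
        _ ≤ ∏ j, ENNReal.ofReal (Real.exp (B ^ 2 * (s * c j) ^ 2 / 2)) :=
            Finset.prod_le_prod' fun j _ => hsub i j (s * c j)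
        _ = ENNReal.ofReal (Real.exp (B ^ 2 * s ^ 2 / 2)) := by
            have hsum : ∑ j, B ^ 2 * (s * c j) ^ 2 / 2 = B ^ 2 * s ^ 2 / 2 := by
              have h5 : ∑ j, B ^ 2 * (s * c j) ^ 2 / 2
                  = B ^ 2 * s ^ 2 / 2 * ∑ j, (c j) ^ 2 := by
                rw [Finset.mul_sum]
                exact Finset.sum_congr rfl fun j _ => by ring
              rw [h5, hc2, mul_one]
            rw [← ENNReal.ofReal_prod_of_nonneg (fun j _ => (Real.exp_pos _).le), ← Real.exp_sum,
              hsum]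
    -- Chernoff
    have hcher := measure_le_chernoff (μ := μ) (fun ω => ∑ i, lam i * (∑ j, c j * Y i j ω) ^ 2)
      (hWmeas c) (1/(4*B^2)) (t^2*(1-ε)^2) (by positivity)
    have hint : ∫⁻ ω, ENNReal.ofReal
          (Real.exp (1/(4*B^2) * ∑ i, lam i * (∑ j, c j * Y i j ω) ^ 2)) ∂μ ≤
        ENNReal.ofReal (Real.exp ((∑ i, lam i) / 2)) := by
      have hPM := lintegral_prod_mask (fun p ω => Y p.1 p.2 ω) (fun p => hmeas p.1 p.2) hindep
        (ρ := fun i : Fin d => {i} ×ˢ (Finset.univ : Finset (Fin m)))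
        (fun k l hkl => by
          simp only [Finset.disjoint_left, Finset.mem_product, Finset.mem_singleton]
          rintro p ⟨h1, -⟩ ⟨h2, -⟩
          exact hkl (h1.symm.trans h2))
        (g := fun i v => ENNReal.ofReal
          (Real.exp (lam i / (4*B^2) * (∑ j, c j * v (i, j)) ^ 2)))
        (fun i => ENNReal.measurable_ofReal.comp (Real.measurable_exp.comp
          (((Finset.measurable_sum Finset.univ fun j _ =>
            (measurable_pi_apply (i, j)).const_mul _).pow_const 2).const_mul _)))
        Finset.univ
      simp only [Finset.mem_product, Finset.mem_singleton, Finset.mem_univ, and_true,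
        if_pos rfl, if_true] at hPM
      calc ∫⁻ ω, ENNReal.ofReal
            (Real.exp (1/(4*B^2) * ∑ i, lam i * (∑ j, c j * Y i j ω) ^ 2)) ∂μ
          = ∫⁻ ω, ∏ i, ENNReal.ofReal
              (Real.exp (lam i / (4*B^2) * (∑ j, c j * Y i j ω) ^ 2)) ∂μ := by
            refine lintegral_congr fun ω => ?_
            rw [Finset.mul_sum, Real.exp_sum,
              ENNReal.ofReal_prod_of_nonneg (fun i _ => (Real.exp_pos _).le)]
            refine Finset.prod_congr rfl fun i _ => ?_
            congr 2
            ring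
        _ = ∏ i, ∫⁻ ω, ENNReal.ofReal
              (Real.exp (lam i / (4*B^2) * (∑ j, c j * Y i j ω) ^ 2)) ∂μ := hPM
        _ ≤ ∏ i, ENNReal.ofReal (Real.exp (lam i / 2)) :=
            Finset.prod_le_prod' fun i _ =>
              lintegral_exp_mul_sq_le B hB (fun ω => ∑ j, c j * Y i j ω) (hZmeas c i)
                (hZsub i) (lam i) (hlam i).1 (hlam i).2
        _ = ENNReal.ofReal (Real.exp ((∑ i, lam i) / 2)) := by
            rw [← ENNReal.ofReal_prod_of_nonneg (fun i _ => (Real.exp_pos _).le),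
              ← Real.exp_sum, ← Finset.sum_div]
    calc μ {ω : Ω | t ^ 2 * (1 - ε) ^ 2 ≤ ∑ i, lam i * (∑ j, c j * Y i j ω) ^ 2}
        ≤ ENNReal.ofReal (Real.exp (-(1/(4*B^2) * (t^2*(1-ε)^2)))) *
            ∫⁻ ω, ENNReal.ofReal
              (Real.exp (1/(4*B^2) * ∑ i, lam i * (∑ j, c j * Y i j ω) ^ 2)) ∂μ := hcher
      _ ≤ ENNReal.ofReal (Real.exp (-(1/(4*B^2) * (t^2*(1-ε)^2)))) *
            ENNReal.ofReal (Real.exp ((∑ i, lam i) / 2)) := mul_le_mul_right hint _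
      _ = ENNReal.ofReal (Real.exp ((∑ i, lam i) / 2 - t ^ 2 * (1 - ε) ^ 2 / (4 * B ^ 2))) := by
          rw [← ENNReal.ofReal_mul (Real.exp_pos _).le, ← Real.exp_add]
          congr 1
          ring
  -- union bound and conclusion
  calc μ {ω : Ω | t ≤ ‖A ω‖}
      ≤ μ (⋃ c ∈ C, {ω : Ω | t ^ 2 * (1 - ε) ^ 2 ≤
          ∑ i, lam i * (∑ j, c j * Y i j ω) ^ 2}) := measure_mono hincl
    _ ≤ ∑ c ∈ C, μ {ω : Ω | t ^ 2 * (1 - ε) ^ 2 ≤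
          ∑ i, lam i * (∑ j, c j * Y i j ω) ^ 2} := measure_biUnion_finset_le C _
    _ ≤ ∑ _c ∈ C, ENNReal.ofReal
          (Real.exp ((∑ i, lam i) / 2 - t ^ 2 * (1 - ε) ^ 2 / (4 * B ^ 2))) :=
        Finset.sum_le_sum key
    _ = (C.card : ℝ≥0∞) * ENNReal.ofReal
          (Real.exp ((∑ i, lam i) / 2 - t ^ 2 * (1 - ε) ^ 2 / (4 * B ^ 2))) := by
        rw [Finset.sum_const, nsmul_eq_mul]
    _ = _ := by
        rw [hCcard, ENNReal.ofReal_mul (by positivity), ENNReal.ofReal_natCast]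
        rfl
end
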